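/- arXiv:1912.12364 — 6 statements merged into one kernel-verified Lean document; each statement's English description precedes it below -/
import Mathlib

section
/- Let Ω be a g×g complex symmetric matrix whose imaginary part is positive definite. Then the square of the Gaussian integral ∫_{ℝ^g} exp(πi xᵀΩx) dx equals 1/det(-iΩ). -/
open MeasureTheory Matrix

namespace GaussAux

open Complex Real

noncomputable def Qc {n : ℕ} (M : Matrix (Fin n) (Fin n) ℂ) (x : Fin n → ℝ) : ℂ :=
  (fun i => (x i : ℂ)) ⬝ᵥ (M *ᵥ fun i => (x i : ℂ))

lemma dotProduct_cons {R : Type*} [CommRing R] {n : ℕ} (M : Matrix (Fin (n+1)) (Fin (n+1)) R)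
    (hM : ∀ i j, M j i = M i j) (t : R) (y : Fin n → R) :
    Fin.cons t y ⬝ᵥ (M *ᵥ Fin.cons t y) =
      M 0 0 * t ^ 2 + 2 * (∑ j, M 0 j.succ * y j) * t
        + y ⬝ᵥ (M.submatrix Fin.succ Fin.succ *ᵥ y) := by
  have hrow : ∀ i, (M *ᵥ Fin.cons t y) i = M i 0 * t + ∑ j, M i j.succ * y j := by
    intro i
    simp [mulVec, dotProduct, Fin.sum_univ_succ]
  simp only [dotProduct, Fin.sum_univ_succ, Fin.cons_zero, Fin.cons_succ, hrow, mulVec,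
    submatrix_apply]
  have h2 : ∀ i : Fin n, y i * (M i.succ 0 * t + ∑ j, M i.succ j.succ * y j)
      = M 0 i.succ * y i * t + y i * ∑ j, M i.succ j.succ * y j := by
    intro i; rw [hM]; ring
  rw [Finset.sum_congr rfl fun i _ => h2 i, Finset.sum_add_distrib, ← Finset.sum_mul]
  ring

lemma coe_cons {n : ℕ} (t : ℝ) (y : Fin n → ℝ) :
    (fun i => ((Fin.cons t y : Fin (n+1) → ℝ) i : ℂ))
      = Fin.cons (t : ℂ) (fun i => (y i : ℂ)) := by
  funext i
  refine Fin.cases ?_ ?_ i <;> simp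

lemma im_dot {n : ℕ} (M : Matrix (Fin n) (Fin n) ℂ) (x : Fin n → ℝ) :
    ((fun i => (x i : ℂ)) ⬝ᵥ (M *ᵥ fun i => (x i : ℂ))).im
      = x ⬝ᵥ ((M.map Complex.im) *ᵥ x) := by
  simp [dotProduct, mulVec, Complex.im_sum, Complex.mul_im, Finset.mul_sum]

lemma quad_smul {n : ℕ} (Y : Matrix (Fin n) (Fin n) ℝ) (c : ℝ) (v : Fin n → ℝ) :
    (c • v) ⬝ᵥ (Y *ᵥ (c • v)) = c ^ 2 * (v ⬝ᵥ (Y *ᵥ v)) := by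
  rw [Matrix.mulVec_smul, smul_dotProduct, dotProduct_smul]
  simp [smul_eq_mul]; ring

lemma posdef_bound {n : ℕ} {Y : Matrix (Fin n) (Fin n) ℝ} (hY : Y.PosDef) :
    ∃ ε : ℝ, 0 < ε ∧ ∀ x : Fin n → ℝ, ε * (∑ i, x i ^ 2) ≤ x ⬝ᵥ (Y *ᵥ x) := by
  rcases isEmpty_or_nonempty (Fin n) with h | h
  · exact ⟨1, one_pos, fun x => by simp [dotProduct]⟩
  · set E := EuclideanSpace ℝ (Fin n)
    have hfc : Continuous (fun x : E => (x : Fin n → ℝ) ⬝ᵥ (Y *ᵥ (x : Fin n → ℝ))) := by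
      have hc : Continuous (fun x : Fin n → ℝ => x ⬝ᵥ (Y *ᵥ x)) := by
        simp only [dotProduct, mulVec]
        exact continuous_finset_sum _ fun i _ =>
          (continuous_apply i).mul (continuous_finset_sum _ fun j _ =>
            continuous_const.mul (continuous_apply j))
      exact hc.comp (EuclideanSpace.equiv (Fin n) ℝ).continuous
    haveI : Nontrivial E := ⟨0, EuclideanSpace.single (Classical.arbitrary (Fin n)) 1, by
      intro hcontra
      have h1 := congrArg (fun v : E => v (Classical.arbitrary (Fin n))) hcontra
      simp at h1⟩
    have hne : (Metric.sphere (0 : E) 1).Nonempty :=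
      NormedSpace.sphere_nonempty.mpr zero_le_one
    obtain ⟨u, hu_mem, hu_min⟩ :=
      (isCompact_sphere (0 : E) 1).exists_isMinOn hne hfc.continuousOn
    have hu_norm : ‖u‖ = 1 := by simpa using hu_mem
    have hu_ne : (u : Fin n → ℝ) ≠ 0 := by
      intro h0
      have : u = 0 := by simpa using h0
      rw [this] at hu_norm; simp at hu_norm
    refine ⟨u ⬝ᵥ (Y *ᵥ u), hY.dotProduct_mulVec_pos hu_ne |>.trans_eq (by simp), fun x => ?_⟩
    rcases eq_or_ne x 0 with rfl | hx
    · simp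
    · set x' : E := WithLp.toLp 2 x with hx'
      have hx'0 : x' ≠ 0 := fun h => hx (by rw [hx'] at h; exact congrArg WithLp.ofLp h)
      have hr : 0 < ‖x'‖ := norm_pos_iff.mpr hx'0
      set u' : E := ‖x'‖⁻¹ • x' with hu'
      have hu'_mem : u' ∈ Metric.sphere (0 : E) 1 := by
        simp [hu', norm_smul, abs_of_pos (inv_pos.mpr hr), inv_mul_cancel₀ hr.ne']
      have hmin := hu_min hu'_mem
      have hval : (u' : Fin n → ℝ) ⬝ᵥ (Y *ᵥ (u' : Fin n → ℝ))
          = ‖x'‖⁻¹ ^ 2 * (x ⬝ᵥ (Y *ᵥ x)) := quad_smul Y _ x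
      have hsum : ∑ i, x i ^ 2 = ‖x'‖ ^ 2 := by
        rw [EuclideanSpace.norm_eq]
        rw [Real.sq_sqrt (by positivity)]
        simp [sq_abs, hx']
      rw [hsum]
      have h2 : u ⬝ᵥ (Y *ᵥ u) ≤ ‖x'‖⁻¹ ^ 2 * (x ⬝ᵥ (Y *ᵥ x)) := by
        simpa [hval] using hmin
      calc u ⬝ᵥ (Y *ᵥ u) * ‖x'‖ ^ 2 ≤ (‖x'‖⁻¹ ^ 2 * (x ⬝ᵥ (Y *ᵥ x))) * ‖x'‖ ^ 2 := by
            exact mul_le_mul_of_nonneg_right h2 (by positivity)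
        _ = x ⬝ᵥ (Y *ᵥ x) := by
            field_simp

lemma norm_integrand {n : ℕ} (M : Matrix (Fin n) (Fin n) ℂ) (x : Fin n → ℝ) :
    ‖Complex.exp ((π : ℂ) * Complex.I *
        ((fun i => (x i : ℂ)) ⬝ᵥ (M *ᵥ fun i => (x i : ℂ))))‖
      = Real.exp (-(π * (x ⬝ᵥ ((M.map Complex.im) *ᵥ x)))) := by
  rw [Complex.norm_exp, ← im_dot]
  congr 1
  simp [Complex.mul_re, Complex.mul_im]

lemma integrable_f {n : ℕ} (Ω : Matrix (Fin n) (Fin n) ℂ)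
    (hpos : (Ω.map Complex.im).PosDef) :
    Integrable (fun x : Fin n → ℝ => Complex.exp ((π : ℂ) * Complex.I * Qc Ω x)) := by
  obtain ⟨ε, hε, hbd⟩ := posdef_bound hpos
  have hint : Integrable (fun x : Fin n → ℝ =>
      Complex.exp (-∑ i, ((π * ε : ℝ) : ℂ) * (x i : ℂ) ^ 2 + ∑ i, (0 : ℂ) * (x i : ℂ))) :=
    GaussianFourier.integrable_cexp_neg_sum_mul_add (fun i => by
      simpa using mul_pos Real.pi_pos hε) 0
  have hcont : Continuous (fun x : Fin n → ℝ => Complex.exp ((π : ℂ) * Complex.I * Qc Ω x)) := by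
    apply Complex.continuous_exp.comp
    apply continuous_const.mul
    unfold Qc
    simp only [dotProduct, mulVec]
    exact continuous_finset_sum _ fun i _ =>
      (Complex.continuous_ofReal.comp (continuous_apply i)).mul
        (continuous_finset_sum _ fun j _ =>
          continuous_const.mul (Complex.continuous_ofReal.comp (continuous_apply j)))
  apply hint.norm.mono' hcont.aestronglyMeasurable
  filter_upwards with x
  rw [show Qc Ω x = ((fun i => (x i : ℂ)) ⬝ᵥ (Ω *ᵥ fun i => (x i : ℂ))) from rfl, norm_integrand]
  have h1 : ‖Complex.exp (-∑ i, ((π * ε : ℝ) : ℂ) * (x i : ℂ) ^ 2 + ∑ i, (0 : ℂ) * (x i : ℂ))‖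
      = Real.exp (-(π * ε * ∑ i, x i ^ 2)) := by
    rw [Complex.norm_exp]
    congr 1
    simp [Complex.re_sum, ← Complex.ofReal_pow, Finset.mul_sum, mul_assoc]
  rw [h1, Real.exp_le_exp, neg_le_neg_iff, mul_assoc]
  exact mul_le_mul_of_nonneg_left (hbd x) Real.pi_pos.le

noncomputable def schur {n : ℕ} (Ω : Matrix (Fin (n+1)) (Fin (n+1)) ℂ) :
    Matrix (Fin n) (Fin n) ℂ :=
  Matrix.of fun i j => Ω i.succ j.succ - Ω 0 i.succ * Ω 0 j.succ * (Ω 0 0)⁻¹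

lemma exp_decomp {n : ℕ} (Ω : Matrix (Fin (n+1)) (Fin (n+1)) ℂ) (hsym : Ω.IsSymm)
    (t : ℝ) (y : Fin n → ℝ) :
    (π : ℂ) * I * Qc Ω (Fin.cons t y)
      = ((π : ℂ) * I * Ω 0 0) * (t : ℂ) ^ 2
        + (2 * ((π : ℂ) * I) * ∑ j, Ω 0 j.succ * (y j : ℂ)) * (t : ℂ)
        + (π : ℂ) * I * Qc (Ω.submatrix Fin.succ Fin.succ) y := by
  unfold Qc
  rw [coe_cons, dotProduct_cons Ω (fun i j => hsym.apply i j)]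
  ring

lemma qc_schur {n : ℕ} (Ω : Matrix (Fin (n+1)) (Fin (n+1)) ℂ) (y : Fin n → ℝ) :
    Qc (schur Ω) y = Qc (Ω.submatrix Fin.succ Fin.succ) y
      - (∑ j, Ω 0 j.succ * (y j : ℂ)) ^ 2 * (Ω 0 0)⁻¹ := by
  unfold Qc schur
  simp only [dotProduct, mulVec, Matrix.of_apply, Matrix.submatrix_apply, sub_mul, mul_sub,
    Finset.sum_sub_distrib]
  congr 1
  rw [sq, Finset.sum_mul_sum, Finset.sum_mul]
  refine Finset.sum_congr rfl fun i _ => ?_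
  rw [Finset.mul_sum, Finset.sum_mul]
  exact Finset.sum_congr rfl fun j _ => by ring

lemma aux_exponent (c a β Q : ℂ) (hc : c ≠ 0) (ha : a ≠ 0) :
    c * Q - (2 * c * β) ^ 2 / (4 * (c * a)) = c * (Q - β ^ 2 * a⁻¹) := by
  field_simp
  ring

lemma split_integral {n : ℕ} (Ω : Matrix (Fin (n+1)) (Fin (n+1)) ℂ) (hsym : Ω.IsSymm)
    (hpos : (Ω.map Complex.im).PosDef) (hγ : 0 < (Ω 0 0).im) :
    (∫ x : Fin (n+1) → ℝ, Complex.exp ((π : ℂ) * I * Qc Ω x))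
      = ((π : ℂ) / -((π : ℂ) * I * Ω 0 0)) ^ (1/2 : ℂ)
        * ∫ y : Fin n → ℝ, Complex.exp ((π : ℂ) * I * Qc (schur Ω) y) := by
  have hB : ((π : ℂ) * I * Ω 0 0).re < 0 := by
    simp only [Complex.mul_re, Complex.mul_im, Complex.I_re, Complex.I_im, Complex.ofReal_re,
      Complex.ofReal_im]
    nlinarith [Real.pi_pos, hγ]
  have hIf := integrable_f Ω hpos
  set f : (Fin (n+1) → ℝ) → ℂ := fun x => Complex.exp ((π : ℂ) * I * Qc Ω x) with hf
  set e := MeasurableEquiv.piFinSuccAbove (fun _ : Fin (n+1) => ℝ) 0 with he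
  have MP := volume_preserving_piFinSuccAbove (fun _ : Fin (n+1) => ℝ) 0
  have hcomp : ∀ p : ℝ × (Fin n → ℝ), e.symm p = Fin.cons p.1 p.2 := by
    intro p
    simp [he, MeasurableEquiv.piFinSuccAbove_symm_apply, Fin.insertNth_zero', Fin.consEquiv]
  have h0 : (∫ x : Fin (n+1) → ℝ, f x)
      = ∫ p : ℝ × (Fin n → ℝ), f (Fin.cons p.1 p.2) := by
    rw [← (MeasurePreserving.symm e MP).integral_comp' (f := e.symm) f]
    simp only [hcomp]
  have h1 : Integrable (fun p : ℝ × (Fin n → ℝ) => f (Fin.cons p.1 p.2)) := by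
    have h2 := ((MeasurePreserving.symm e MP).integrable_comp_emb
      e.symm.measurableEmbedding).mpr hIf
    refine h2.congr (Filter.Eventually.of_forall fun p => ?_)
    rw [Function.comp_apply, hcomp]
  have h2 : (∫ p : ℝ × (Fin n → ℝ), f (Fin.cons p.1 p.2))
      = ∫ y : Fin n → ℝ, ∫ t : ℝ, f (Fin.cons t y) := by
    exact MeasureTheory.integral_prod_symm _ h1
  have ha : (Ω 0 0) ≠ 0 := fun h => by rw [h] at hγ; simp at hγ
  have hinner : ∀ y : Fin n → ℝ, (∫ t : ℝ, f (Fin.cons t y))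
      = ((π : ℂ) / -((π : ℂ) * I * Ω 0 0)) ^ (1/2 : ℂ)
        * Complex.exp ((π : ℂ) * I * Qc (schur Ω) y) := by
    intro y
    have hpt : ∀ t : ℝ, f (Fin.cons t y)
        = Complex.exp (((π : ℂ) * I * Ω 0 0) * (t : ℂ) ^ 2
            + (2 * ((π : ℂ) * I) * ∑ j, Ω 0 j.succ * (y j : ℂ)) * (t : ℂ)
            + (π : ℂ) * I * Qc (Ω.submatrix Fin.succ Fin.succ) y) := fun t => by
      rw [hf]; exact congrArg Complex.exp (exp_decomp Ω hsym t y)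
    simp_rw [hpt]
    rw [integral_cexp_quadratic hB]
    congr 1
    refine congrArg Complex.exp ?_
    rw [qc_schur]
    exact aux_exponent ((π : ℂ) * I) (Ω 0 0) _ _
      (mul_ne_zero (Complex.ofReal_ne_zero.mpr Real.pi_ne_zero) Complex.I_ne_zero) ha
  rw [h0, h2]
  simp_rw [hinner]
  rw [MeasureTheory.integral_const_mul]

lemma diag_im_pos {n : ℕ} {Ω : Matrix (Fin n) (Fin n) ℂ}
    (hpos : (Ω.map Complex.im).PosDef) (i : Fin n) : 0 < (Ω i i).im := by
  have hx : (Pi.single i 1 : Fin n → ℝ) ≠ 0 := by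
    intro h
    have := congrFun h i
    simp [Pi.single_apply] at this
  have := hpos.dotProduct_mulVec_pos hx
  simpa [dotProduct, mulVec, Pi.single_apply, Finset.mul_sum, Matrix.map_apply] using this

lemma schur_posdef {n : ℕ} (Ω : Matrix (Fin (n+1)) (Fin (n+1)) ℂ) (hsym : Ω.IsSymm)
    (hpos : (Ω.map Complex.im).PosDef) : ((schur Ω).map Complex.im).PosDef := by
  have hγ : 0 < (Ω 0 0).im := diag_im_pos hpos 0
  have ha : Ω 0 0 ≠ 0 := fun h => by rw [h] at hγ; simp at hγ
  set a := Ω 0 0 with ha_def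
  set α := a.re
  set γ := a.im
  refine Matrix.PosDef.of_dotProduct_mulVec_pos ?_ ?_
  · ext i j
    simp only [conjTranspose_apply, Matrix.map_apply, star_trivial, schur, Matrix.of_apply]
    rw [hsym.apply i.succ j.succ, mul_comm (Ω 0 j.succ) (Ω 0 i.succ)]
  · intro y hy
    rw [star_trivial]
    have him := im_dot (schur Ω) y
    rw [show ((fun i => ((y i : ℝ) : ℂ)) ⬝ᵥ (schur Ω *ᵥ fun i => ((y i : ℝ) : ℂ)))
        = Qc (schur Ω) y from rfl] at him
    rw [← him, qc_schur]
    set β := ∑ j, Ω 0 j.succ * (y j : ℂ) with hβ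
    set p := ∑ j, (Ω 0 j.succ).re * y j with hp
    set q := ∑ j, (Ω 0 j.succ).im * y j with hq
    have hβre : β.re = p := by
      rw [hβ, Complex.re_sum]
      exact Finset.sum_congr rfl fun j _ => by simp [Complex.mul_re]
    have hβim : β.im = q := by
      rw [hβ, Complex.im_sum]
      exact Finset.sum_congr rfl fun j _ => by simp [Complex.mul_im]
    set T := y ⬝ᵥ (((Ω.submatrix Fin.succ Fin.succ).map Complex.im) *ᵥ y) with hT
    have hTeq : (Qc (Ω.submatrix Fin.succ Fin.succ) y).im = T := im_dot _ y
    have hkey : q ^ 2 < γ * T := by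
      have hx0 : (Fin.cons (-q) (γ • y) : Fin (n+1) → ℝ) ≠ 0 := by
        intro h
        apply hy
        funext i
        have := congrFun h i.succ
        simp only [Fin.cons_succ, Pi.smul_apply, smul_eq_mul, Pi.zero_apply] at this
        have : γ * y i = 0 := this
        rcases mul_eq_zero.mp this with h' | h'
        · exact absurd h' hγ.ne'
        · exact h'
      have hval := hpos.dotProduct_mulVec_pos hx0
      rw [star_trivial] at hval
      rw [dotProduct_cons (Ω.map Complex.im)
        (fun i j => by simp only [Matrix.map_apply]; rw [hsym.apply i j]) (-q) (γ • y)] at hval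
      have hsum : (∑ j, (Ω.map Complex.im) 0 j.succ * (γ • y) j) = γ * q := by
        rw [hq, Finset.mul_sum]
        exact Finset.sum_congr rfl fun j _ => by
          simp [Matrix.map_apply]; ring
      have hsm : ((Ω.map Complex.im).submatrix Fin.succ Fin.succ)
          = (Ω.submatrix Fin.succ Fin.succ).map Complex.im := rfl
      rw [hsum, hsm, quad_smul] at hval
      have h00 : (Ω.map Complex.im) 0 0 = γ := rfl
      rw [h00] at hval
      nlinarith [hval, hγ]
    have him2 : (Qc (Ω.submatrix Fin.succ Fin.succ) y - β ^ 2 * a⁻¹).im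
        = T - ((p^2 - q^2) * (-γ / (α^2 + γ^2)) + (2*p*q) * (α / (α^2 + γ^2))) := by
      rw [Complex.sub_im, hTeq]
      congr 1
      rw [Complex.mul_im, Complex.inv_re, Complex.inv_im, Complex.normSq_apply]
      rw [sq β, Complex.mul_re, Complex.mul_im, hβre, hβim]
      ring_nf
      rfl
    rw [him2]
    have hden : 0 < α ^ 2 + γ ^ 2 := by positivity
    have hXeq : (p ^ 2 - q ^ 2) * (-γ / (α ^ 2 + γ ^ 2)) + 2 * p * q * (α / (α ^ 2 + γ ^ 2))
        = ((q ^ 2 - p ^ 2) * γ + 2 * p * q * α) / (α ^ 2 + γ ^ 2) := by ring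
    rw [hXeq, sub_pos, div_lt_iff₀ hden]
    nlinarith [mul_pos (sub_pos.mpr hkey) hden, sq_nonneg (α * q - γ * p), hγ]

def finSumEquiv (n : ℕ) : Fin (n+1) ≃ Unit ⊕ Fin n where
  toFun := Fin.cases (Sum.inl ()) Sum.inr
  invFun := Sum.elim (fun _ => 0) Fin.succ
  left_inv i := by refine Fin.cases ?_ ?_ i <;> simp
  right_inv s := by rcases s with s | s <;> simp

lemma det_schur {n : ℕ} (Ω : Matrix (Fin (n+1)) (Fin (n+1)) ℂ) (hsym : Ω.IsSymm)
    (ha : Ω 0 0 ≠ 0) : Ω.det = Ω 0 0 * (schur Ω).det := by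
  set A : Matrix Unit Unit ℂ := Matrix.of fun _ _ => Ω 0 0 with hA
  set B : Matrix Unit (Fin n) ℂ := Matrix.of fun _ j => Ω 0 j.succ with hB
  set C : Matrix (Fin n) Unit ℂ := Matrix.of fun i _ => Ω i.succ 0 with hC
  set D : Matrix (Fin n) (Fin n) ℂ := Ω.submatrix Fin.succ Fin.succ with hD
  have hAinv : A * (Matrix.of fun _ _ => (Ω 0 0)⁻¹) = 1 := by
    ext i j
    simp [hA, Matrix.mul_apply, Matrix.one_apply, mul_inv_cancel₀ ha, Subsingleton.elim i j]
  haveI : Invertible A := invertibleOfRightInverse _ _ hAinv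
  have hInvA : ⅟A = Matrix.of fun _ _ => (Ω 0 0)⁻¹ := invOf_eq_right_inv hAinv
  have hΩeq : Ω = (Matrix.fromBlocks A B C D).submatrix (finSumEquiv n) (finSumEquiv n) := by
    ext i j
    refine Fin.cases ?_ ?_ i <;> intros <;> refine Fin.cases ?_ ?_ j <;> intros <;>
      simp [finSumEquiv, Matrix.fromBlocks, hA, hB, hC, hD]
  conv_lhs => rw [hΩeq]
  rw [Matrix.det_submatrix_equiv_self, Matrix.det_fromBlocks₁₁]
  congr 1
  · simp [hA, Matrix.det_unique]
  · congr 1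
    ext i j
    simp only [Matrix.sub_apply, Matrix.mul_apply, hInvA, Finset.univ_unique, Finset.sum_singleton,
      Matrix.of_apply, hD, Matrix.submatrix_apply, hC, hB, schur]
    rw [hsym.apply 0 i.succ]
    ring

lemma key : ∀ (n : ℕ) (Ω : Matrix (Fin n) (Fin n) ℂ), Ω.IsSymm → (Ω.map Complex.im).PosDef →
    (∫ x : Fin n → ℝ, Complex.exp ((π : ℂ) * I * Qc Ω x)) ^ 2 * ((-Complex.I) • Ω).det = 1 := by
  intro n
  induction n with
  | zero =>
    intro Ω hsym hpos
    have h1 : (∫ x : Fin 0 → ℝ, Complex.exp ((π : ℂ) * I * Qc Ω x)) = 1 := by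
      have hpt : ∀ x : Fin 0 → ℝ, Complex.exp ((π : ℂ) * I * Qc Ω x) = 1 := by
        intro x; simp [Qc, dotProduct]
      simp_rw [hpt]
      have huniv : (volume : Measure (Fin 0 → ℝ)) Set.univ = 1 := by
        rw [MeasureTheory.volume_pi, MeasureTheory.Measure.pi_univ]
        simp
      rw [MeasureTheory.integral_const, measureReal_def, huniv]
      simp
    rw [h1]
    simp [Matrix.det_fin_zero]
  | succ n ih =>
    intro Ω hsym hpos
    have hγ : 0 < (Ω 0 0).im := diag_im_pos hpos 0
    have ha : Ω 0 0 ≠ 0 := fun h => by rw [h] at hγ; simp at hγ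
    have hs := split_integral Ω hsym hpos hγ
    set w : ℂ := (π : ℂ) / -((π : ℂ) * I * Ω 0 0) with hw
    have hw0 : w ≠ 0 := by
      rw [hw]
      exact div_ne_zero (Complex.ofReal_ne_zero.mpr Real.pi_ne_zero)
        (neg_ne_zero.mpr (mul_ne_zero
          (mul_ne_zero (Complex.ofReal_ne_zero.mpr Real.pi_ne_zero) Complex.I_ne_zero) ha))
    have hsq : (w ^ (1/2 : ℂ)) ^ 2 = w := by
      rw [sq, ← Complex.cpow_add _ _ hw0]
      norm_num
    have hSsym : (schur Ω).IsSymm := by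
      unfold Matrix.IsSymm
      ext i j
      simp only [Matrix.transpose_apply, schur, Matrix.of_apply]
      rw [hsym.apply i.succ j.succ, mul_comm (Ω 0 j.succ) (Ω 0 i.succ)]
    have hSpos := schur_posdef Ω hsym hpos
    have hIH := ih (schur Ω) hSsym hSpos
    have hdet : ((-Complex.I) • Ω).det = (-Complex.I)^(n+1) * (Ω 0 0) * (schur Ω).det := by
      rw [Matrix.det_smul, det_schur Ω hsym ha, Fintype.card_fin]
      ring
    have hdetS : ((-Complex.I) • schur Ω).det = (-Complex.I)^n * (schur Ω).det := by
      rw [Matrix.det_smul, Fintype.card_fin]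
    rw [hdetS] at hIH
    have hwa : w * (Ω 0 0) * (-Complex.I) = 1 := by
      rw [hw]
      have hπ : ((π : ℝ) : ℂ) ≠ 0 := Complex.ofReal_ne_zero.mpr Real.pi_ne_zero
      field_simp
    rw [hs, mul_pow, hsq, hdet]
    calc w * (∫ y : Fin n → ℝ, Complex.exp ((π : ℂ) * I * Qc (schur Ω) y)) ^ 2
          * ((-Complex.I)^(n+1) * (Ω 0 0) * (schur Ω).det)
        = (w * (Ω 0 0) * (-Complex.I))
          * ((∫ y : Fin n → ℝ, Complex.exp ((π : ℂ) * I * Qc (schur Ω) y)) ^ 2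
            * ((-Complex.I)^n * (schur Ω).det)) := by ring
      _ = 1 * 1 := by rw [hwa, hIH]
      _ = 1 := one_mul 1

end GaussAux

open Complex in
/-- The square of the Gaussian integral over ℝ^g equals 1/det(-iΩ), for Ω in the
Siegel upper half-space (complex symmetric with positive definite imaginary part). -/
theorem gaussian_integral_sq (g : ℕ) (Ω : Matrix (Fin g) (Fin g) ℂ)
    (hsym : Ω.IsSymm) (hpos : (Ω.map Complex.im).PosDef) :
    (∫ x : Fin g → ℝ, Complex.exp ((Real.pi : ℂ) * Complex.I *
      ((fun i => (x i : ℂ)) ⬝ᵥ (Ω *ᵥ fun i => (x i : ℂ))))) ^ 2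
      = 1 / ((-Complex.I) • Ω).det := by
  have hkey := GaussAux.key g Ω hsym hpos
  unfold GaussAux.Qc at hkey
  have hd : ((-Complex.I) • Ω).det ≠ 0 := by
    intro h
    rw [h, mul_zero] at hkey
    exact one_ne_zero hkey.symm
  rw [eq_div_iff hd]
  exact hkey
end

section
/- Let Ω be a g×g complex symmetric matrix with positive definite imaginary part, and let c ∈ ℂ^g. Then ∫_{ℝ^g} exp(πi (x+c)ᵀΩ(x+c)) dx = ∫_{ℝ^g} exp(πi xᵀΩx) dx; that is, the shifted Gaussian integral is independent of the complex shift c. -/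
open MeasureTheory Matrix

open Complex in
private lemma shift1d {b : ℂ} (hb : b.re < 0) (β γ s : ℂ) :
    ∫ t : ℝ, Complex.exp (b*((t:ℂ)+s)^2 + β*((t:ℂ)+s) + γ)
      = ∫ t : ℝ, Complex.exp (b*(t:ℂ)^2 + β*(t:ℂ) + γ) := by
  have h1 : ∀ t : ℝ, b*((t:ℂ)+s)^2 + β*((t:ℂ)+s) + γ
      = b*(t:ℂ)^2 + (2*b*s+β)*(t:ℂ) + (b*s^2+β*s+γ) := by intro t; ring
  simp_rw [h1]
  rw [integral_cexp_quadratic hb, integral_cexp_quadratic hb]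
  have hb0 : b ≠ 0 := fun h => by simp [h] at hb
  congr 1
  congr 1
  field_simp
  ring

private lemma posdef_lower {m : ℕ} {B : Matrix (Fin m) (Fin m) ℝ} (hB : B.PosDef) :
    ∃ ε > 0, ∀ x : Fin m → ℝ, ε * ∑ i, x i ^ 2 ≤ x ⬝ᵥ (B *ᵥ x) := by
  rcases Nat.eq_zero_or_pos m with hm | hm
  · subst hm
    exact ⟨1, one_pos, fun x => by simp [dotProduct]⟩
  have hcont : Continuous fun x : Fin m → ℝ => x ⬝ᵥ (B *ᵥ x) := by
    simp only [dotProduct, mulVec]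
    exact continuous_finset_sum _ fun i _ => ((continuous_apply i).mul
      (continuous_finset_sum _ fun j _ => (continuous_const.mul (continuous_apply j))))
  set S : Set (Fin m → ℝ) := {x | ∑ i, x i ^ 2 = 1} with hS
  have hSc : IsCompact S := by
    have hclosed : IsClosed S := isClosed_eq (by fun_prop) continuous_const
    have hbdd : Bornology.IsBounded S := by
      apply isBounded_iff_forall_norm_le.2 ⟨1, fun x hx => ?_⟩
      rw [pi_norm_le_iff_of_nonneg zero_le_one]
      intro i
      have hs1 : ∑ j, x j ^ 2 = 1 := hx
      have hle : x i ^ 2 ≤ 1 := hs1 ▸ Finset.single_le_sum (f := fun j => x j ^ 2)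
        (fun j _ => sq_nonneg (x j)) (Finset.mem_univ i)
      rw [Real.norm_eq_abs, abs_le]
      constructor
      · nlinarith [sq_nonneg (x i + 1)]
      · nlinarith [sq_nonneg (x i - 1)]
    exact Metric.isCompact_of_isClosed_isBounded hclosed hbdd
  have hne : S.Nonempty := by
    refine ⟨Pi.single ⟨0, hm⟩ 1, ?_⟩
    simp [hS, Pi.single_apply, Finset.sum_ite_eq']
  obtain ⟨x₀, hx₀S, hmin⟩ := hSc.exists_isMinOn hne hcont.continuousOn
  have hx₀ne : x₀ ≠ 0 := by
    intro h
    rw [h] at hx₀S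
    simp [hS] at hx₀S
  refine ⟨x₀ ⬝ᵥ (B *ᵥ x₀), (by simpa using hB.dotProduct_mulVec_pos hx₀ne), fun x => ?_⟩
  rcases eq_or_ne x 0 with rfl | hx
  · simp
  · set t : ℝ := Real.sqrt (∑ i, x i ^ 2) with ht
    have hsum : 0 < ∑ i, x i ^ 2 := by
      have : ∃ i, x i ≠ 0 := by
        by_contra h
        push_neg at h
        exact hx (funext h)
      obtain ⟨i, hi⟩ := this
      exact Finset.sum_pos' (fun j _ => sq_nonneg _) ⟨i, Finset.mem_univ i, by positivity⟩
    have htpos : 0 < t := Real.sqrt_pos.2 hsum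
    have ht2 : t ^ 2 = ∑ i, x i ^ 2 := Real.sq_sqrt hsum.le
    have hu : (t⁻¹ • x) ∈ S := by
      simp only [hS, Set.mem_setOf_eq, Pi.smul_apply, smul_eq_mul, mul_pow]
      rw [← Finset.mul_sum, ← ht2]
      field_simp
    have h1 : x₀ ⬝ᵥ (B *ᵥ x₀) ≤ (t⁻¹ • x) ⬝ᵥ (B *ᵥ (t⁻¹ • x)) := hmin hu
    have h2 : (t⁻¹ • x) ⬝ᵥ (B *ᵥ (t⁻¹ • x)) = t⁻¹ ^ 2 * (x ⬝ᵥ (B *ᵥ x)) := by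
      rw [smul_dotProduct, mulVec_smul, dotProduct_smul]
      simp [smul_eq_mul]; ring
    rw [h2] at h1
    calc x₀ ⬝ᵥ (B *ᵥ x₀) * ∑ i, x i ^ 2 ≤ (t⁻¹ ^ 2 * (x ⬝ᵥ (B *ᵥ x))) * ∑ i, x i ^ 2 := by
          apply mul_le_mul_of_nonneg_right h1 hsum.le
      _ = x ⬝ᵥ (B *ᵥ x) := by rw [← ht2]; field_simp

private lemma im_dot {m : ℕ} (x : Fin m → ℝ) (v : Fin m → ℂ) :
    (((fun i => (x i : ℂ)) ⬝ᵥ v)).im = ∑ i, x i * (v i).im := by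
  rw [dotProduct, Complex.im_sum]
  exact Finset.sum_congr rfl fun i _ => by simp [Complex.mul_im]

private lemma q_expand {m : ℕ} (Ω : Matrix (Fin m) (Fin m) ℂ) (w : Fin m → ℂ) (x : Fin m → ℝ) :
    ((fun i => (x i : ℂ) + w i) ⬝ᵥ (Ω *ᵥ fun i => (x i : ℂ) + w i))
      = (fun i => (x i : ℂ)) ⬝ᵥ (Ω *ᵥ fun i => (x i : ℂ))
        + (fun i => (x i : ℂ)) ⬝ᵥ ((Ω *ᵥ w) + (Ωᵀ *ᵥ w))
        + w ⬝ᵥ (Ω *ᵥ w) := by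
  have h : (fun i => (x i : ℂ) + w i) = (fun i => (x i : ℂ)) + w := rfl
  have h2 : (fun i => (x i : ℂ)) ⬝ᵥ (Ωᵀ *ᵥ w) = w ⬝ᵥ (Ω *ᵥ fun i => (x i : ℂ)) := by
    rw [dotProduct_mulVec, vecMul_transpose, dotProduct_comm]
  rw [h, mulVec_add, dotProduct_add, add_dotProduct, add_dotProduct, dotProduct_add, h2]
  ring

private lemma q_im {m : ℕ} (Ω : Matrix (Fin m) (Fin m) ℂ) (w : Fin m → ℂ) (x : Fin m → ℝ) :
    (((fun i => (x i : ℂ) + w i) ⬝ᵥ (Ω *ᵥ fun i => (x i : ℂ) + w i))).im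
      = x ⬝ᵥ ((Ω.map Complex.im) *ᵥ x)
        + ∑ j, x j * (((Ω *ᵥ w) j).im + ((Ωᵀ *ᵥ w) j).im)
        + (w ⬝ᵥ (Ω *ᵥ w)).im := by
  rw [q_expand, Complex.add_im, Complex.add_im, im_dot, im_dot]
  congr 2
  · rw [dotProduct]
    refine Finset.sum_congr rfl fun i _ => ?_
    congr 1
    rw [mulVec, dotProduct, Complex.im_sum, mulVec, dotProduct]
    exact Finset.sum_congr rfl fun j _ => by simp [Complex.mul_im, Matrix.map_apply]

open Complex in
private lemma norm_cexp_pi_I (q : ℂ) :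
    ‖Complex.exp ((Real.pi:ℂ) * I * q)‖ = Real.exp (-(Real.pi * q.im)) := by
  rw [Complex.norm_exp]
  congr 1
  simp [Complex.mul_re, Complex.mul_im]

open Complex in
private lemma continuous_qshift {m : ℕ} (Ω : Matrix (Fin m) (Fin m) ℂ) (w : Fin m → ℂ) :
    Continuous fun x : Fin m → ℝ =>
      ((fun i => (x i : ℂ) + w i) ⬝ᵥ (Ω *ᵥ fun i => (x i : ℂ) + w i)) := by
  simp only [dotProduct, mulVec]
  refine continuous_finset_sum _ fun i _ => Continuous.mul ?_ ?_
  · exact (Complex.continuous_ofReal.comp (continuous_apply i)).add continuous_const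
  · exact continuous_finset_sum _ fun j _ => continuous_const.mul
      ((Complex.continuous_ofReal.comp (continuous_apply j)).add continuous_const)

open Complex in
private lemma integrable_shift {m : ℕ} (Ω : Matrix (Fin m) (Fin m) ℂ)
    (hpos : (Ω.map Complex.im).PosDef) (w : Fin m → ℂ) :
    Integrable (fun x : Fin m → ℝ => Complex.exp ((Real.pi:ℂ) * I *
      ((fun i => (x i : ℂ) + w i) ⬝ᵥ (Ω *ᵥ fun i => (x i : ℂ) + w i)))) := by
  obtain ⟨ε, hε, hlow⟩ := posdef_lower hpos
  set π := Real.pi with hπdef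
  set r : Fin m → ℝ := fun j => ((Ω *ᵥ w) j).im + ((Ωᵀ *ᵥ w) j).im with hr
  set K : ℝ := (w ⬝ᵥ (Ω *ᵥ w)).im with hK
  set C : ℝ := Real.exp (π * (∑ j, r j ^ 2 / (2 * ε)) - π * K) with hC
  have hg : Integrable (fun x : Fin m → ℝ => C * Real.exp (-(π * ε / 2) * ∑ j, x j ^ 2)) := by
    have h0 : Integrable (fun v : Fin m → ℝ =>
        Complex.exp (-(((π * ε / 2 : ℝ)):ℂ) * ∑ i, (v i : ℂ) ^ 2 + ∑ i, (0:ℂ) * v i)) :=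
      GaussianFourier.integrable_cexp_neg_mul_sum_add
        (by simp [hπdef]; positivity) _
    have h1 := h0.norm
    have h2 : (fun v : Fin m → ℝ =>
        ‖Complex.exp (-(((π * ε / 2 : ℝ)):ℂ) * ∑ i, (v i : ℂ) ^ 2 + ∑ i, (0:ℂ) * v i)‖)
        = fun x : Fin m → ℝ => Real.exp (-(π * ε / 2) * ∑ j, x j ^ 2) := by
      funext v
      rw [Complex.norm_exp]
      congr 1
      have : (-(((π * ε / 2 : ℝ)):ℂ) * ∑ i, (v i : ℂ) ^ 2 + ∑ i, (0:ℂ) * v i)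
          = ((-(π * ε / 2) * ∑ j, v j ^ 2 : ℝ) : ℂ) := by
        push_cast
        simp
      rw [this, Complex.ofReal_re]
    rw [h2] at h1
    exact h1.const_mul C
  refine hg.mono' ?_ ?_
  · exact (Complex.continuous_exp.comp
      (continuous_const.mul (continuous_qshift Ω w))).aestronglyMeasurable
  · refine Filter.Eventually.of_forall fun x => ?_
    rw [norm_cexp_pi_I, q_im]
    have hquad : ε * ∑ i, x i ^ 2 ≤ x ⬝ᵥ ((Ω.map Complex.im) *ᵥ x) := hlow x
    have hcross : ∀ j, -(ε / 2 * x j ^ 2 + r j ^ 2 / (2 * ε)) ≤ x j * r j := by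
      intro j
      have key : ε / 2 * x j ^ 2 + r j ^ 2 / (2 * ε) + x j * r j
          = (ε * x j + r j) ^ 2 / (2 * ε) := by
        field_simp
        ring
      have h2 : (0:ℝ) ≤ (ε * x j + r j) ^ 2 / (2 * ε) :=
        div_nonneg (sq_nonneg _) (by positivity)
      linarith
    have hsum : -(ε / 2 * ∑ j, x j ^ 2 + ∑ j, r j ^ 2 / (2 * ε)) ≤ ∑ j, x j * r j := by
      rw [Finset.mul_sum, ← Finset.sum_add_distrib, ← Finset.sum_neg_distrib]
      exact Finset.sum_le_sum fun j _ => hcross j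
    have hbound : (ε / 2) * ∑ j, x j ^ 2 - (∑ j, r j ^ 2 / (2 * ε)) + K
        ≤ x ⬝ᵥ ((Ω.map Complex.im) *ᵥ x) + (∑ j, x j * r j) + K := by
      nlinarith [hquad]
    calc Real.exp (-(π * (x ⬝ᵥ ((Ω.map Complex.im) *ᵥ x) + (∑ j, x j * r j) + K)))
        ≤ Real.exp (-(π * ((ε / 2) * ∑ j, x j ^ 2 - (∑ j, r j ^ 2 / (2 * ε)) + K))) := by
          apply Real.exp_le_exp.2
          have hπ : (0:ℝ) < π := Real.pi_pos
          nlinarith [hbound]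
      _ = C * Real.exp (-(π * ε / 2) * ∑ j, x j ^ 2) := by
          rw [hC, ← Real.exp_add]
          congr 1
          ring

private lemma quad_single {m : ℕ} (Ω : Matrix (Fin m) (Fin m) ℂ) (hsym : Ω.IsSymm)
    (v : Fin m → ℂ) (j : Fin m) (u : ℂ) :
    (v + u • (Pi.single j 1 : Fin m → ℂ)) ⬝ᵥ (Ω *ᵥ (v + u • (Pi.single j 1 : Fin m → ℂ)))
      = Ω j j * u ^ 2 + (2 * (Ω *ᵥ v) j) * u + v ⬝ᵥ (Ω *ᵥ v) := by
  have hcol : v ⬝ᵥ (Ω *ᵥ (Pi.single j 1 : Fin m → ℂ)) = (Ω *ᵥ v) j := by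
    rw [mulVec_single_one]
    simp only [dotProduct, mulVec, mul_one, col_apply]
    exact Finset.sum_congr rfl fun i _ => by rw [hsym.apply i j, mul_comm]
  have hrow : (Pi.single j 1 : Fin m → ℂ) ⬝ᵥ (Ω *ᵥ v) = (Ω *ᵥ v) j := by
    rw [single_dotProduct, one_mul]
  have hjj : (Pi.single j 1 : Fin m → ℂ) ⬝ᵥ (Ω *ᵥ (Pi.single j (1:ℂ))) = Ω j j := by
    rw [mulVec_single, single_dotProduct]
    simp
  rw [mulVec_add, mulVec_smul, dotProduct_add, add_dotProduct, add_dotProduct,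
    dotProduct_smul, smul_dotProduct, smul_dotProduct, dotProduct_smul, hcol, hrow, hjj]
  simp only [smul_eq_mul]
  ring

private noncomputable def gint {m : ℕ} (Ω : Matrix (Fin m) (Fin m) ℂ) (w : Fin m → ℂ) : ℂ :=
  ∫ x : Fin m → ℝ, Complex.exp ((Real.pi : ℂ) * Complex.I *
    ((fun i => (x i : ℂ) + w i) ⬝ᵥ (Ω *ᵥ fun i => (x i : ℂ) + w i)))

private lemma insert_decomp {n : ℕ} (j : Fin (n+1)) (y : Fin n → ℝ) (t : ℝ)
    (w : Fin (n+1) → ℂ) :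
    (fun i => ((Fin.insertNth (α := fun _ => ℝ) j t y i : ℝ) : ℂ) + w i)
      = (j.insertNth 0 (fun k => (y k : ℂ) + w (j.succAbove k)))
        + ((t : ℂ) + w j) • (Pi.single j 1 : Fin (n+1) → ℂ) := by
  funext i
  refine Fin.succAboveCases j ?_ ?_ i
  · simp [Fin.insertNth_apply_same]
  · intro k
    have hne : j.succAbove k ≠ j := Fin.succAbove_ne j k
    simp [Fin.insertNth_apply_succAbove, Pi.single_eq_of_ne hne]

private lemma diag_im_pos {m : ℕ} {Ω : Matrix (Fin m) (Fin m) ℂ}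
    (hpos : (Ω.map Complex.im).PosDef) (j : Fin m) : 0 < (Ω j j).im := by
  have h := hpos.dotProduct_mulVec_pos (x := Pi.single j 1) (by
    intro h
    have := congrFun h j
    simp at this)
  have he : (Pi.single j 1 : Fin m → ℝ) ⬝ᵥ ((Ω.map Complex.im) *ᵥ Pi.single j 1)
      = (Ω j j).im := by
    rw [mulVec_single, single_dotProduct]
    simp
  have h' : 0 < (Pi.single j 1 : Fin m → ℝ) ⬝ᵥ ((Ω.map Complex.im) *ᵥ Pi.single j 1) := by
    simpa only [star_trivial] using h
  rw [he] at h'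
  exact h'

open Complex in
private lemma zero_coord {n : ℕ} (Ω : Matrix (Fin (n+1)) (Fin (n+1)) ℂ) (hsym : Ω.IsSymm)
    (hpos : (Ω.map Complex.im).PosDef) (w : Fin (n+1) → ℂ) (j : Fin (n+1)) :
    gint Ω w = gint Ω (Function.update w j 0) := by
  classical
  set π := Real.pi with hπdef
  set e := MeasurableEquiv.piFinSuccAbove (fun _ : Fin (n+1) => ℝ) j with he
  have hmp : MeasurePreserving e volume volume :=
    volume_preserving_piFinSuccAbove (fun _ : Fin (n+1) => ℝ) j
  have key : ∀ w' : Fin (n+1) → ℂ,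
      gint Ω w' = ∫ y : Fin n → ℝ, ∫ t : ℝ, Complex.exp ((π : ℂ) * I *
        ((fun i => ((Fin.insertNth (α := fun _ => ℝ) j t y i : ℝ) : ℂ) + w' i) ⬝ᵥ
          (Ω *ᵥ fun i => ((Fin.insertNth (α := fun _ => ℝ) j t y i : ℝ) : ℂ) + w' i))) := by
    intro w'
    have hint := integrable_shift Ω hpos w'
    have h1 : gint Ω w' = ∫ p : ℝ × (Fin n → ℝ), Complex.exp ((π : ℂ) * I *
        ((fun i => ((e.symm p) i : ℂ) + w' i) ⬝ᵥ (Ω *ᵥ fun i => ((e.symm p) i : ℂ) + w' i))) := by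
      rw [gint]
      exact ((MeasurePreserving.symm e hmp).integral_comp e.symm.measurableEmbedding
        (fun x : Fin (n+1) → ℝ => Complex.exp ((π : ℂ) * I *
          ((fun i => (x i : ℂ) + w' i) ⬝ᵥ (Ω *ᵥ fun i => (x i : ℂ) + w' i))))).symm
    have h2 := (MeasurePreserving.symm e hmp).integrable_comp_emb
      (e.symm.measurableEmbedding) (ν := volume)
      (g := fun x : Fin (n+1) → ℝ => Complex.exp ((π : ℂ) * I *
        ((fun i => (x i : ℂ) + w' i) ⬝ᵥ (Ω *ᵥ fun i => (x i : ℂ) + w' i))))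
    rw [h1]
    have h3 := integral_prod_symm (μ := volume) (ν := volume) ((fun x : Fin (n+1) → ℝ =>
      Complex.exp ((π : ℂ) * I * ((fun i => (x i : ℂ) + w' i) ⬝ᵥ
        (Ω *ᵥ fun i => (x i : ℂ) + w' i)))) ∘ e.symm) (h2.2 hint)
    exact h3
  rw [key w, key (Function.update w j 0)]
  congr 1
  funext y
  set vv : Fin (n+1) → ℂ := j.insertNth 0 (fun k => (y k : ℂ) + w (j.succAbove k)) with hvv
  have hb : ((π : ℂ) * I * Ω j j).re < 0 := by
    have := diag_im_pos hpos j
    simp [Complex.mul_re, Complex.mul_im]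
    nlinarith [Real.pi_pos]
  have hup : ∀ k : Fin n, Function.update w j 0 (j.succAbove k) = w (j.succAbove k) :=
    fun k => Function.update_of_ne (Fin.succAbove_ne j k) _ _
  have lhs_eq : ∀ t : ℝ, ((fun i => ((Fin.insertNth (α := fun _ => ℝ) j t y i : ℝ) : ℂ) + w i) ⬝ᵥ
      (Ω *ᵥ fun i => ((Fin.insertNth (α := fun _ => ℝ) j t y i : ℝ) : ℂ) + w i))
      = Ω j j * ((t:ℂ) + w j) ^ 2 + (2 * (Ω *ᵥ vv) j) * ((t:ℂ) + w j) + vv ⬝ᵥ (Ω *ᵥ vv) := by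
    intro t
    rw [insert_decomp j y t w, quad_single Ω hsym vv j]
  have rhs_eq : ∀ t : ℝ, ((fun i => ((Fin.insertNth (α := fun _ => ℝ) j t y i : ℝ) : ℂ)
        + Function.update w j 0 i) ⬝ᵥ
      (Ω *ᵥ fun i => ((Fin.insertNth (α := fun _ => ℝ) j t y i : ℝ) : ℂ) + Function.update w j 0 i))
      = Ω j j * ((t:ℂ)) ^ 2 + (2 * (Ω *ᵥ vv) j) * ((t:ℂ)) + vv ⬝ᵥ (Ω *ᵥ vv) := by
    intro t
    rw [insert_decomp j y t (Function.update w j 0), Function.update_self]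
    have hvv2 : (j.insertNth 0 (fun k => (y k : ℂ) + Function.update w j 0 (j.succAbove k))) = vv := by
      rw [hvv]
      exact congrArg (j.insertNth 0) (funext fun k => by rw [hup k])
    rw [hvv2, quad_single Ω hsym vv j, add_zero]
  calc (∫ t : ℝ, Complex.exp ((π : ℂ) * I *
        ((fun i => ((Fin.insertNth (α := fun _ => ℝ) j t y i : ℝ) : ℂ) + w i) ⬝ᵥ
          (Ω *ᵥ fun i => ((Fin.insertNth (α := fun _ => ℝ) j t y i : ℝ) : ℂ) + w i))))
      = ∫ t : ℝ, Complex.exp (((π : ℂ) * I * Ω j j) * ((t:ℂ) + w j) ^ 2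
          + ((π : ℂ) * I * (2 * (Ω *ᵥ vv) j)) * ((t:ℂ) + w j)
          + ((π : ℂ) * I * (vv ⬝ᵥ (Ω *ᵥ vv)))) := by
        congr 1
        funext t
        rw [lhs_eq t]
        congr 1
        ring
    _ = ∫ t : ℝ, Complex.exp (((π : ℂ) * I * Ω j j) * ((t:ℂ)) ^ 2
          + ((π : ℂ) * I * (2 * (Ω *ᵥ vv) j)) * ((t:ℂ))
          + ((π : ℂ) * I * (vv ⬝ᵥ (Ω *ᵥ vv)))) := shift1d hb _ _ _
    _ = ∫ t : ℝ, Complex.exp ((π : ℂ) * I *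
        ((fun i => ((Fin.insertNth (α := fun _ => ℝ) j t y i : ℝ) : ℂ) + Function.update w j 0 i) ⬝ᵥ
          (Ω *ᵥ fun i => ((Fin.insertNth (α := fun _ => ℝ) j t y i : ℝ) : ℂ)
            + Function.update w j 0 i))) := by
        congr 1
        funext t
        rw [rhs_eq t]
        congr 1
        ring

/-- The shifted Gaussian integral over ℝ^g is independent of the complex shift c,
for Ω complex symmetric with positive definite imaginary part. -/
theorem gaussian_integral_shift (g : ℕ) (Ω : Matrix (Fin g) (Fin g) ℂ)
    (hsym : Ω.IsSymm) (hpos : (Ω.map Complex.im).PosDef) (c : Fin g → ℂ) :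
    (∫ x : Fin g → ℝ, Complex.exp ((Real.pi : ℂ) * Complex.I *
      ((fun i => (x i : ℂ) + c i) ⬝ᵥ (Ω *ᵥ fun i => (x i : ℂ) + c i))))
      = ∫ x : Fin g → ℝ, Complex.exp ((Real.pi : ℂ) * Complex.I *
      ((fun i => (x i : ℂ)) ⬝ᵥ (Ω *ᵥ fun i => (x i : ℂ)))) := by
  classical
  have hRHS : gint Ω (0 : Fin g → ℂ)
      = ∫ x : Fin g → ℝ, Complex.exp ((Real.pi : ℂ) * Complex.I *
        ((fun i => (x i : ℂ)) ⬝ᵥ (Ω *ᵥ fun i => (x i : ℂ)))) := by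
    rw [gint]
    simp only [Pi.zero_apply, add_zero]
  cases g with
  | zero =>
    have h : ∀ x : Fin 0 → ℝ, ((fun i => (x i : ℂ) + c i) ⬝ᵥ (Ω *ᵥ fun i => (x i : ℂ) + c i))
        = ((fun i => (x i : ℂ)) ⬝ᵥ (Ω *ᵥ fun i => (x i : ℂ))) := by
      intro x
      simp [dotProduct]
    simp only [h]
  | succ n =>
    have main : ∀ (s : Finset (Fin (n+1))) (w : Fin (n+1) → ℂ), (∀ i ∉ s, w i = 0) →
        gint Ω w = gint Ω 0 := by
      intro s
      induction s using Finset.induction_on with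
      | empty =>
        intro w hw
        have : w = 0 := funext fun i => hw i (Finset.notMem_empty i)
        rw [this]
      | @insert j s hj ih =>
        intro w hw
        rw [zero_coord Ω hsym hpos w j]
        apply ih
        intro i hi
        rcases eq_or_ne i j with rfl | hij
        · simp
        · rw [Function.update_of_ne hij]
          exact hw i (by simp [hij, hi])
    have h1 := main Finset.univ c (fun i hi => absurd (Finset.mem_univ i) hi)
    calc (∫ x : Fin (n+1) → ℝ, Complex.exp ((Real.pi : ℂ) * Complex.I *
          ((fun i => (x i : ℂ) + c i) ⬝ᵥ (Ω *ᵥ fun i => (x i : ℂ) + c i))))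
        = gint Ω c := rfl
      _ = gint Ω 0 := h1
      _ = _ := hRHS
end

section
/- Let Ω = N + iM be an invertible complex symmetric g×g matrix with M, N real, and let c ∈ ℂ^g with conj(c)ᵀMc < 0 (which forces cᵀMc ≠ 0). Then det(−i(Ω − (2i/(cᵀMc))·M c cᵀ M)) = det(−iΩ) · (cᵀ conj(Ω) Im(−Ω⁻¹) conj(Ω) c)/(cᵀMc). -/
open Matrix

/-- Determinant identity for the rank-one modification Ω − (2i/(cᵀMc))·(Mc)(Mc)ᵀ,
where M = Im(Ω) and conj(c)ᵀMc is a negative real number. -/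
theorem det_rank_one_modification (g : ℕ) (Ω : Matrix (Fin g) (Fin g) ℂ)
    (hsym : Ω.IsSymm) (hdet : IsUnit Ω.det) (c : Fin g → ℂ)
    (hneg : ∃ r : ℝ, r < 0 ∧
      (star c) ⬝ᵥ ((Ω.map fun z => (z.im : ℂ)) *ᵥ c) = (r : ℂ))
    (hc0 : c ⬝ᵥ ((Ω.map fun z => (z.im : ℂ)) *ᵥ c) ≠ 0) :
    ((-Complex.I) • (Ω - (2 * Complex.I / (c ⬝ᵥ ((Ω.map fun z => (z.im : ℂ)) *ᵥ c))) •
        vecMulVec ((Ω.map fun z => (z.im : ℂ)) *ᵥ c) ((Ω.map fun z => (z.im : ℂ)) *ᵥ c))).det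
      = ((-Complex.I) • Ω).det *
        (c ⬝ᵥ ((Ω.map (starRingEnd ℂ)) *ᵥ (((-Ω⁻¹).map fun z => (z.im : ℂ)) *ᵥ
          ((Ω.map (starRingEnd ℂ)) *ᵥ c)))) /
        (c ⬝ᵥ ((Ω.map fun z => (z.im : ℂ)) *ᵥ c)) := by
  set M' : Matrix (Fin g) (Fin g) ℂ := Ω.map fun z => (z.im : ℂ) with hM'
  set Ωc : Matrix (Fin g) (Fin g) ℂ := Ω.map (starRingEnd ℂ) with hΩc
  set B : Matrix (Fin g) (Fin g) ℂ := Ω⁻¹ with hB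
  set Bc : Matrix (Fin g) (Fin g) ℂ := B.map (starRingEnd ℂ) with hBc
  set Im' : Matrix (Fin g) (Fin g) ℂ := (-B).map fun z => (z.im : ℂ) with hIm'
  set a : ℂ := c ⬝ᵥ (M' *ᵥ c) with ha
  set m : Fin g → ℂ := M' *ᵥ c with hm
  have hI2 : (2 * Complex.I) ≠ 0 := by simp [Complex.I_ne_zero]
  have hΩB : Ω * B = 1 := Matrix.mul_nonsing_inv Ω hdet
  have hBΩ : B * Ω = 1 := Matrix.nonsing_inv_mul Ω hdet
  have hΩcBc : Ωc * Bc = 1 := by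
    rw [hΩc, hBc, ← Matrix.map_mul, hΩB]
    ext i j
    simp [Matrix.one_apply]
  have hΩc2 : Ωc = Ω - (2 * Complex.I) • M' := by
    ext i j
    simp [hΩc, hM', Complex.ext_iff]
    ring
  have hIm2 : (2 * Complex.I) • Im' = Bc - B := by
    ext i j
    simp [hIm', hBc, Complex.ext_iff]
    ring
  have hM'symm : M'ᵀ = M' := by
    rw [hM', ← Matrix.transpose_map, hsym.eq]
  -- pieces for the key matrix identity
  have e2 : Ωc * B = 1 - (2 * Complex.I) • (M' * B) := by
    nth_rewrite 1 [hΩc2]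
    rw [Matrix.sub_mul, Matrix.smul_mul, hΩB]
  have e3 : (M' * B) * Ωc = M' - (2 * Complex.I) • (M' * (B * M')) := by
    nth_rewrite 1 [hΩc2]
    rw [Matrix.mul_sub, Matrix.mul_smul, Matrix.mul_assoc, Matrix.mul_assoc, hBΩ,
      Matrix.mul_one]
  have key : Ωc * Im' * Ωc = M' - (2 * Complex.I) • (M' * (B * M')) := by
    have h1 : (2 * Complex.I) • (Ωc * Im' * Ωc)
        = (2 * Complex.I) • (M' - (2 * Complex.I) • (M' * (B * M'))) := by
      have h0 : (2 * Complex.I) • (Ωc * Im' * Ωc) = Ωc * ((2 * Complex.I) • Im') * Ωc := by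
        rw [Matrix.mul_smul, Matrix.smul_mul]
      rw [h0, hIm2, Matrix.mul_sub, hΩcBc, Matrix.sub_mul, Matrix.one_mul, e2,
        Matrix.sub_mul, Matrix.one_mul, Matrix.smul_mul, e3]
      rw [smul_sub, smul_smul]
      abel
    exact smul_right_injective _ hI2 h1
  -- rewrite the RHS inner product
  have hS : c ⬝ᵥ (Ωc *ᵥ (Im' *ᵥ (Ωc *ᵥ c)))
      = a - (2 * Complex.I) * (c ⬝ᵥ ((M' * (B * M')) *ᵥ c)) := by
    rw [Matrix.mulVec_mulVec, Matrix.mulVec_mulVec, key, Matrix.sub_mulVec,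
      Matrix.smul_mulVec, dotProduct_sub, dotProduct_smul, ha, smul_eq_mul]
  set t : ℂ := c ⬝ᵥ ((M' * (B * M')) *ᵥ c) with ht
  -- symmetric move of M' across dot products
  have hmove : ∀ y : Fin g → ℂ, m ⬝ᵥ y = c ⬝ᵥ (M' *ᵥ y) := by
    intro y
    rw [dotProduct_mulVec, ← hM'symm, Matrix.vecMul_transpose]
  have htt : m ⬝ᵥ (B *ᵥ m) = t := by
    rw [hmove, Matrix.mulVec_mulVec, hm, Matrix.mulVec_mulVec, Matrix.mul_assoc]
  -- rank-one determinant computation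
  set s : ℂ := 2 * Complex.I / a with hs
  set u : Fin g → ℂ := B *ᵥ ((-s) • m) with hu
  have hfact : Ω - s • vecMulVec m m = Ω * (1 + replicateCol (Fin 1) u * replicateRow (Fin 1) m) := by
    rw [Matrix.mul_add, Matrix.mul_one, ← Matrix.mul_assoc, ← Matrix.replicateCol_mulVec,
      hu, Matrix.mulVec_mulVec, hΩB, Matrix.one_mulVec, Matrix.replicateCol_smul,
      Matrix.smul_mul]
    erw [← Matrix.vecMulVec_eq (ι := Fin 1)]
    rw [neg_smul, ← sub_eq_add_neg]
  have hdet1 : (Ω - s • vecMulVec m m).det = Ω.det * (1 - s * (m ⬝ᵥ (B *ᵥ m))) := by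
    rw [hfact, Matrix.det_mul]
    erw [Matrix.det_one_add_replicateCol_mul_replicateRow (ι := Fin 1)]
    rw [hu, Matrix.mulVec_smul,
      dotProduct_smul, smul_eq_mul, neg_mul, ← sub_eq_add_neg]
  rw [Matrix.det_smul, Matrix.det_smul, hdet1, htt, hS, hs]
  field_simp
end

section
/- Let M be a real symmetric g×g matrix of signature (g−1,1) (i.e., g−1 positive eigenvalues and 1 negative eigenvalue), and let c ∈ ℂ^g with conj(c)ᵀMc < 0. Then cᵀMc ≠ 0, and the real symmetric matrix A := M + M·Re((−(1/2)·cᵀMc)⁻¹ · c cᵀ)·M is positive definite. -/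
open Matrix

lemma quad_expand (g : ℕ) (M : Matrix (Fin g) (Fin g) ℝ) (hM : M.IsHermitian) :
    ∃ f : (Fin g → ℝ) → (Fin g → ℝ),
      (∀ x y, x ⬝ᵥ M *ᵥ y = ∑ i, hM.eigenvalues i * (f x i * f y i)) ∧
      (∀ x, f x = 0 → x = 0) ∧
      (∀ (r s : ℝ) (x y), f (r • x + s • y) = r • f x + s • f y) := by
  set U : Matrix (Fin g) (Fin g) ℝ := (hM.eigenvectorUnitary : Matrix (Fin g) (Fin g) ℝ) with hU
  refine ⟨fun x => star U *ᵥ x, ?_, ?_, ?_⟩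
  · intro x y
    conv_lhs => rw [hM.spectral_theorem, Unitary.conjStarAlgAut_apply]
    rw [← mulVec_mulVec, ← mulVec_mulVec, dotProduct_mulVec, ← mulVec_transpose]
    rw [show (U)ᵀ = star U from (star_eq_conjTranspose U ▸ (conjTranspose_eq_transpose_of_trivial U).symm)]
    simp only [dotProduct, mulVec_diagonal, Function.comp, RCLike.ofReal_real_eq_id, id_eq]
    exact Finset.sum_congr rfl fun i _ => by ring
  · intro x hx
    simp only at hx
    have h2 : U *ᵥ (star U *ᵥ x) = x := by
      rw [mulVec_mulVec, (Matrix.mem_unitaryGroup_iff).mp hM.eigenvectorUnitary.2, one_mulVec]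
    rw [hx, mulVec_zero] at h2
    exact h2.symm
  · intro r s x y
    simp [mulVec_add, mulVec_smul]

lemma neg_perp_zero (g : ℕ) (M : Matrix (Fin g) (Fin g) ℝ) (hM : M.IsHermitian) (i₀ : Fin g)
    (hpos : ∀ i, i ≠ i₀ → 0 < hM.eigenvalues i)
    (u v : Fin g → ℝ) (hu : u ⬝ᵥ M *ᵥ u < 0) (hv : v ⬝ᵥ M *ᵥ v ≤ 0)
    (huv : u ⬝ᵥ M *ᵥ v = 0) : v = 0 := by
  obtain ⟨f, hf, hinj, hlin⟩ := quad_expand g M hM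
  set ev := hM.eigenvalues with hev
  set α := f u i₀ with hα
  set β := f v i₀ with hβ
  -- α ≠ 0
  have hα0 : α ≠ 0 := by
    intro h0
    have : 0 ≤ u ⬝ᵥ M *ᵥ u := by
      rw [hf u u]
      apply Finset.sum_nonneg
      intro i _
      rcases eq_or_ne i i₀ with rfl | hi
      · rw [← hα, h0]; simp
      · exact mul_nonneg (hpos i hi).le (mul_self_nonneg _)
    linarith
  set z := α • v + (-β) • u with hz
  have hfz : f z = α • f v + (-β) • f u := hlin α (-β) v u
  have hfzi₀ : f z i₀ = 0 := by
    rw [hfz]; simp [← hα, ← hβ]; ring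
  -- q z via formula
  have hqz : z ⬝ᵥ M *ᵥ z = α^2 * (v ⬝ᵥ M *ᵥ v) + β^2 * (u ⬝ᵥ M *ᵥ u) := by
    rw [hf z z, hf v v, hf u u]
    have huv' : (0:ℝ) = ∑ i, ev i * (f u i * f v i) := by rw [← hf u v, huv]
    have : ∀ i, ev i * (f z i * f z i) =
        α^2 * (ev i * (f v i * f v i)) + β^2 * (ev i * (f u i * f u i))
        - 2*α*β * (ev i * (f u i * f v i)) := by
      intro i
      have : f z i = α * f v i - β * f u i := by rw [hfz]; simp; ring
      rw [this]; ring
    rw [Finset.sum_congr rfl (fun i _ => this i)]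
    rw [Finset.sum_sub_distrib, ← Finset.mul_sum, ← huv', Finset.sum_add_distrib,
      ← Finset.mul_sum, ← Finset.mul_sum]
    ring
  have hqznn : ∀ i, 0 ≤ ev i * (f z i * f z i) := by
    intro i
    rcases eq_or_ne i i₀ with rfl | hi
    · rw [hfzi₀]; simp
    · exact mul_nonneg (hpos i hi).le (mul_self_nonneg _)
  have hqz0 : 0 ≤ z ⬝ᵥ M *ᵥ z := by
    rw [hf z z]; exact Finset.sum_nonneg fun i _ => hqznn i
  have h1 : α^2 * (v ⬝ᵥ M *ᵥ v) ≤ 0 := mul_nonpos_of_nonneg_of_nonpos (by positivity) hv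
  have h2 : β^2 * (u ⬝ᵥ M *ᵥ u) ≤ 0 := mul_nonpos_of_nonneg_of_nonpos (by positivity) hu.le
  rw [hqz] at hqz0
  have h3 : 0 ≤ β^2 * (u ⬝ᵥ M *ᵥ u) := by linarith
  have hβ0 : β = 0 := by
    by_contra hb
    have : β^2 * (u ⬝ᵥ M *ᵥ u) < 0 :=
      mul_neg_of_pos_of_neg (by positivity) hu
    linarith
  have hqv : v ⬝ᵥ M *ᵥ v = 0 := by
    have h4 : 0 ≤ α^2 * (v ⬝ᵥ M *ᵥ v) := by
      rw [hβ0] at hqz0; simpa using hqz0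
    have h5 : α^2 * (v ⬝ᵥ M *ᵥ v) = 0 := le_antisymm h1 h4
    rcases mul_eq_zero.mp h5 with h | h
    · exact absurd (pow_eq_zero_iff (by norm_num) |>.mp h) hα0
    · exact h
  -- now q z = 0, so all f z i = 0
  have hsum0 : ∑ i, ev i * (f z i * f z i) = 0 := by
    rw [← hf z z]; rw [hqz, hβ0, hqv]; ring
  have hall : ∀ i ∈ Finset.univ, ev i * (f z i * f z i) = 0 :=
    (Finset.sum_eq_zero_iff_of_nonneg (fun i _ => hqznn i)).mp hsum0
  have hfz0 : f z = 0 := by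
    funext i
    rcases eq_or_ne i i₀ with rfl | hi
    · exact hfzi₀
    · have := hall i (Finset.mem_univ i)
      have hp := hpos i hi
      have : f z i * f z i = 0 := by
        rcases mul_eq_zero.mp this with h | h
        · exact absurd h hp.ne'
        · exact h
      simpa [mul_self_eq_zero] using this
  have hz0 : z = 0 := hinj z hfz0
  have : α • v = 0 := by
    rw [hz, hβ0] at hz0; simpa using hz0
  rcases smul_eq_zero.mp this with h | h
  · exact absurd h hα0
  · exact h

section Main
variable {g : ℕ} {M : Matrix (Fin g) (Fin g) ℝ}

lemma Bsymm (hM : M.IsHermitian) (x y : Fin g → ℝ) : x ⬝ᵥ M *ᵥ y = y ⬝ᵥ M *ᵥ x := by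
  have hMt : Mᵀ = M := by
    have := hM.eq
    rwa [conjTranspose_eq_transpose_of_trivial] at this
  rw [dotProduct_mulVec, ← mulVec_transpose, hMt, dotProduct_comm]

lemma main_ineq (g : ℕ) (M : Matrix (Fin g) (Fin g) ℝ) (hM : M.IsHermitian) (i₀ : Fin g)
    (hpos : ∀ i, i ≠ i₀ → 0 < hM.eigenvalues i)
    (a b : Fin g → ℝ)
    (hab : a ⬝ᵥ M *ᵥ b = 0)
    (hsum : a ⬝ᵥ M *ᵥ a + b ⬝ᵥ M *ᵥ b < 0)
    (hdiff : 0 < a ⬝ᵥ M *ᵥ a - b ⬝ᵥ M *ᵥ b)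
    (x : Fin g → ℝ) (hx : x ≠ 0) :
    0 < x ⬝ᵥ M *ᵥ x - (2/(a ⬝ᵥ M *ᵥ a - b ⬝ᵥ M *ᵥ b)) *
      ((x ⬝ᵥ M *ᵥ a)^2 - (x ⬝ᵥ M *ᵥ b)^2) := by
  set qa := a ⬝ᵥ M *ᵥ a with hqa
  set qb := b ⬝ᵥ M *ᵥ b with hqbdef
  set t := qa - qb with ht
  have ht0 : 0 < t := hdiff
  have hqb : qb < 0 := by linarith
  set β := (x ⬝ᵥ M *ᵥ b) / qb with hβ
  set y := x + (-β) • b with hy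
  -- perpendicularity facts
  have hperp : ∀ v : Fin g → ℝ, b ⬝ᵥ M *ᵥ v = 0 → 0 ≤ v ⬝ᵥ M *ᵥ v := by
    intro v hbv
    by_contra h
    push_neg at h
    have hv0 := neg_perp_zero g M hM i₀ hpos b v hqb h.le hbv
    rw [hv0] at h
    simp at h
  have hperp' : ∀ v : Fin g → ℝ, b ⬝ᵥ M *ᵥ v = 0 → v ≠ 0 → 0 < v ⬝ᵥ M *ᵥ v := by
    intro v hbv hv
    rcases lt_or_eq_of_le (hperp v hbv) with h | h
    · exact h
    · exact absurd (neg_perp_zero g M hM i₀ hpos b v hqb h.ge hbv) hv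
  have hba : b ⬝ᵥ M *ᵥ a = 0 := by rw [Bsymm hM]; exact hab
  have hby : b ⬝ᵥ M *ᵥ y = 0 := by
    rw [hy, mulVec_add, dotProduct_add, mulVec_smul, dotProduct_smul]
    rw [show b ⬝ᵥ M *ᵥ x = x ⬝ᵥ M *ᵥ b from Bsymm hM b x, hβ, ← hqbdef]
    rw [smul_eq_mul, neg_mul, div_mul_cancel₀ _ hqb.ne, add_neg_cancel]
  have hyb : y ⬝ᵥ M *ᵥ b = 0 := by rw [Bsymm hM]; exact hby
  have expand : ∀ (u v : Fin g → ℝ) (rr ss : ℝ), (u + rr • v) ⬝ᵥ M *ᵥ (u + ss • v)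
      = u ⬝ᵥ M *ᵥ u + rr * (v ⬝ᵥ M *ᵥ u) + ss * (u ⬝ᵥ M *ᵥ v) + rr*ss*(v ⬝ᵥ M *ᵥ v) := by
    intro u v rr ss
    simp only [mulVec_add, mulVec_smul, dotProduct_add, add_dotProduct, dotProduct_smul,
      smul_dotProduct, smul_eq_mul]
    ring
  have hya : y ⬝ᵥ M *ᵥ a = x ⬝ᵥ M *ᵥ a := by
    rw [hy, add_dotProduct, smul_dotProduct, hba]
    simp
  have hxeq : x = y + β • b := by
    rw [hy]
    funext i
    simp
  have hqx : x ⬝ᵥ M *ᵥ x = y ⬝ᵥ M *ᵥ y + β^2 * qb := by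
    conv_lhs => rw [hxeq]
    rw [expand y b β β, hyb, hby, hqbdef]
    ring
  have hxb : x ⬝ᵥ M *ᵥ b = β * qb := by
    rw [hβ, div_mul_cancel₀ _ hqb.ne]
  set qy := y ⬝ᵥ M *ᵥ y with hqy
  have hqynn : 0 ≤ qy := hperp y hby
  have hCS : (y ⬝ᵥ M *ᵥ a)^2 ≤ qy * qa := by
    have hquad : ∀ s : ℝ, 0 ≤ qa * (s*s) + (2*(y ⬝ᵥ M *ᵥ a)) * s + qy := by
      intro s
      have hb' : b ⬝ᵥ M *ᵥ (y + s • a) = 0 := by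
        rw [mulVec_add, dotProduct_add, mulVec_smul, dotProduct_smul, hby, hba]
        simp
      have h0 := hperp _ hb'
      have hexp : (y + s • a) ⬝ᵥ M *ᵥ (y + s • a)
          = qa * (s*s) + (2*(y ⬝ᵥ M *ᵥ a)) * s + qy := by
        rw [expand y a s s, show a ⬝ᵥ M *ᵥ y = y ⬝ᵥ M *ᵥ a from Bsymm hM a y, hqa, hqy]
        ring
      rw [hexp] at h0
      exact h0
    have hd := discrim_le_zero hquad
    rw [discrim] at hd
    nlinarith [hd]
  have hr : qa + qb < 0 := hsum
  have key : 0 < (x ⬝ᵥ M *ᵥ x) * t - 2 * ((x ⬝ᵥ M *ᵥ a)^2 - (x ⬝ᵥ M *ᵥ b)^2) := by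
    rw [hqx, ← hya, hxb]
    rcases eq_or_ne y 0 with hy0 | hy0
    · have hβ0 : β ≠ 0 := by
        intro h
        apply hx
        rw [hxeq, hy0, h]
        simp
      have hqy0 : qy = 0 := by rw [hqy, hy0]; simp
      have hya0 : y ⬝ᵥ M *ᵥ a = 0 := by rw [hy0]; simp
      rw [hqy0, hya0]
      have hb2 : 0 < β^2 := by positivity
      have : 0 < qb * (qa + qb) := mul_pos_of_neg_of_neg hqb hr
      nlinarith [mul_pos hb2 this]
    · have hqyp : 0 < qy := hperp' y hby hy0
      have h1 : 0 < qy * (-(qa+qb)) := mul_pos hqyp (by linarith)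
      have h2 : 0 ≤ β^2 * (qb * (qa+qb)) :=
        mul_nonneg (sq_nonneg β) (mul_pos_of_neg_of_neg hqb hr).le
      nlinarith [hCS, h1, h2]
  have hrw : x ⬝ᵥ M *ᵥ x - (2/t) * ((x ⬝ᵥ M *ᵥ a)^2 - (x ⬝ᵥ M *ᵥ b)^2)
      = ((x ⬝ᵥ M *ᵥ x) * t - 2 * ((x ⬝ᵥ M *ᵥ a)^2 - (x ⬝ᵥ M *ᵥ b)^2)) / t := by
    field_simp
  rw [hrw]
  exact div_pos key ht0
end Main

lemma pair_re (g : ℕ) (M : Matrix (Fin g) (Fin g) ℝ) (u v : Fin g → ℂ) :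
    (u ⬝ᵥ ((M.map fun x : ℝ => (x : ℂ)) *ᵥ v)).re
      = (fun i => (u i).re) ⬝ᵥ M *ᵥ (fun i => (v i).re)
        - (fun i => (u i).im) ⬝ᵥ M *ᵥ (fun i => (v i).im) := by
  simp only [dotProduct, mulVec, Matrix.map_apply, Finset.mul_sum, Complex.re_sum,
    Complex.mul_re, Complex.mul_im, Complex.ofReal_re, Complex.ofReal_im]
  rw [← Finset.sum_sub_distrib]
  refine Finset.sum_congr rfl fun i _ => ?_
  rw [← Finset.sum_sub_distrib]
  refine Finset.sum_congr rfl fun j _ => ?_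
  ring

lemma pair_im (g : ℕ) (M : Matrix (Fin g) (Fin g) ℝ) (u v : Fin g → ℂ) :
    (u ⬝ᵥ ((M.map fun x : ℝ => (x : ℂ)) *ᵥ v)).im
      = (fun i => (u i).re) ⬝ᵥ M *ᵥ (fun i => (v i).im)
        + (fun i => (u i).im) ⬝ᵥ M *ᵥ (fun i => (v i).re) := by
  simp only [dotProduct, mulVec, Matrix.map_apply, Finset.mul_sum, Complex.im_sum,
    Complex.mul_re, Complex.mul_im, Complex.ofReal_re, Complex.ofReal_im]
  rw [← Finset.sum_add_distrib]
  refine Finset.sum_congr rfl fun i _ => ?_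
  rw [← Finset.sum_add_distrib]
  refine Finset.sum_congr rfl fun j _ => ?_
  ring

lemma quad_N (g : ℕ) (c : Fin g → ℂ) (z : ℂ) (p : Fin g → ℝ) :
    p ⬝ᵥ ((z • vecMulVec c c).map Complex.re) *ᵥ p
      = (z * (∑ i, (p i : ℂ) * c i)^2).re := by
  have hsq : (∑ i, (p i : ℂ) * c i)^2
      = ∑ i, ∑ j, ((p i : ℂ) * c i) * ((p j : ℂ) * c j) := by
    rw [sq, Finset.sum_mul_sum]
  rw [hsq, Finset.mul_sum, Complex.re_sum]
  simp only [dotProduct, mulVec, Matrix.map_apply, Matrix.smul_apply, vecMulVec_apply,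
    smul_eq_mul, Finset.mul_sum, Complex.re_sum]
  refine Finset.sum_congr rfl fun i _ => ?_
  refine Finset.sum_congr rfl fun j _ => ?_
  simp [Complex.mul_re, Complex.mul_im]
  ring

lemma sum_re (g : ℕ) (p : Fin g → ℝ) (c : Fin g → ℂ) :
    (∑ i, (p i : ℂ) * c i).re = p ⬝ᵥ (fun i => (c i).re) := by
  simp [Complex.re_sum, dotProduct, Complex.mul_re]

lemma sum_im (g : ℕ) (p : Fin g → ℝ) (c : Fin g → ℂ) :
    (∑ i, (p i : ℂ) * c i).im = p ⬝ᵥ (fun i => (c i).im) := by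
  simp [Complex.im_sum, dotProduct, Complex.mul_im]

/-- For M real symmetric of signature (g−1,1) and c ∈ ℂ^g with conj(c)ᵀMc < 0,
one has cᵀMc ≠ 0 and M + M·Re((−(1/2)cᵀMc)⁻¹ c cᵀ)·M is positive definite. -/
theorem pos_def_modification (g : ℕ) (M : Matrix (Fin g) (Fin g) ℝ)
    (hM : M.IsHermitian) (i₀ : Fin g)
    (hneg : hM.eigenvalues i₀ < 0)
    (hpos : ∀ i, i ≠ i₀ → 0 < hM.eigenvalues i)
    (c : Fin g → ℂ)
    (hc : ∃ r : ℝ, r < 0 ∧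
      (star c) ⬝ᵥ ((M.map fun x => (x : ℂ)) *ᵥ c) = (r : ℂ)) :
    c ⬝ᵥ ((M.map fun x => (x : ℂ)) *ᵥ c) ≠ 0 ∧
    (M + M * ((((-(1/2 : ℂ) * (c ⬝ᵥ ((M.map fun x => (x : ℂ)) *ᵥ c)))⁻¹ •
        vecMulVec c c).map Complex.re)) * M).PosDef := by
  obtain ⟨r, hr, hstar⟩ := hc
  set Mc : Matrix (Fin g) (Fin g) ℂ := M.map fun x => (x : ℂ) with hMc
  set T : ℂ := c ⬝ᵥ Mc *ᵥ c with hTdef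
  set a : Fin g → ℝ := fun i => (c i).re with ha
  set b : Fin g → ℝ := fun i => (c i).im with hb
  have hstar_re : (fun i => ((star c) i).re) = a := by
    funext i; simp [ha, Pi.star_apply]
  have hstar_im : (fun i => ((star c) i).im) = -b := by
    funext i; simp [hb, Pi.star_apply]
  have hsum : a ⬝ᵥ M *ᵥ a + b ⬝ᵥ M *ᵥ b = r := by
    have h1 := pair_re g M (star c) c
    rw [hstar, hstar_re, hstar_im] at h1
    simp only [Complex.ofReal_re, neg_dotProduct] at h1
    rw [← ha, ← hb] at h1
    linarith
  have hTre : T.re = a ⬝ᵥ M *ᵥ a - b ⬝ᵥ M *ᵥ b := by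
    have := pair_re g M c c
    rw [← hTdef, ← ha, ← hb] at this
    exact this
  have hTim : T.im = a ⬝ᵥ M *ᵥ b + b ⬝ᵥ M *ᵥ a := by
    have := pair_im g M c c
    rw [← hTdef, ← ha, ← hb] at this
    exact this
  have hT : T ≠ 0 := by
    intro hT0
    have h1 : a ⬝ᵥ M *ᵥ a - b ⬝ᵥ M *ᵥ b = 0 := by rw [← hTre, hT0]; simp
    have h2 : a ⬝ᵥ M *ᵥ b + b ⬝ᵥ M *ᵥ a = 0 := by rw [← hTim, hT0]; simp
    have h3 : b ⬝ᵥ M *ᵥ a = a ⬝ᵥ M *ᵥ b := Bsymm hM b a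
    have hab0 : a ⬝ᵥ M *ᵥ b = 0 := by linarith
    have hb0 : b = 0 := neg_perp_zero g M hM i₀ hpos a b (by linarith) (by linarith) hab0
    have : b ⬝ᵥ M *ᵥ b = 0 := by rw [hb0]; simp
    linarith
  refine ⟨hT, ?_⟩
  -- rotation
  set t : ℝ := ‖T‖ with htdef
  have ht : 0 < t := norm_pos_iff.mpr hT
  obtain ⟨w, hw⟩ := IsAlgClosed.exists_pow_nat_eq ((t : ℂ)/T) zero_lt_two
  have hw0 : w ≠ 0 := by
    intro h
    rw [h] at hw
    have : (t:ℂ)/T ≠ 0 := div_ne_zero (by exact_mod_cast ht.ne') hT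
    simp at hw
    exact this hw.symm
  have hnsq : Complex.normSq w = 1 := by
    have h1 : (Complex.normSq w)^2 = 1 := by
      have : Complex.normSq (w^2) = Complex.normSq ((t:ℂ)/T) := by rw [hw]
      rw [map_pow] at this
      rw [this, map_div₀, Complex.normSq_ofReal, Complex.normSq_eq_norm_sq, ← htdef]
      field_simp
    have h2 : 0 ≤ Complex.normSq w := Complex.normSq_nonneg w
    have h3 : (Complex.normSq w - 1) * (Complex.normSq w + 1) = 0 := by ring_nf; linarith [h1]
    rcases mul_eq_zero.mp h3 with h | h
    · linarith
    · linarith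
  have hκ : (starRingEnd ℂ) w * w = 1 := by
    rw [mul_comm, Complex.mul_conj, hnsq]
    norm_num
  set a' : Fin g → ℝ := fun i => ((w • c) i).re with ha'
  set b' : Fin g → ℝ := fun i => ((w • c) i).im with hb'
  have hT' : (w • c) ⬝ᵥ Mc *ᵥ (w • c) = (t : ℂ) := by
    rw [smul_dotProduct, mulVec_smul, dotProduct_smul, smul_eq_mul, smul_eq_mul,
      ← mul_assoc, ← sq, hw, ← hTdef, div_mul_cancel₀ _ hT]
  have hstar' : star (w • c) ⬝ᵥ Mc *ᵥ (w • c) = (r : ℂ) := by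
    rw [star_smul, smul_dotProduct, mulVec_smul, dotProduct_smul, smul_eq_mul, smul_eq_mul,
      ← mul_assoc, hstar, Complex.star_def, hκ, one_mul]
  -- real/imaginary data for the rotated vector
  have hsum' : a' ⬝ᵥ M *ᵥ a' + b' ⬝ᵥ M *ᵥ b' = r := by
    have h1 := pair_re g M (star (w • c)) (w • c)
    rw [hstar'] at h1
    have e1 : (fun i => ((star (w • c)) i).re) = a' := by
      funext i; simp [ha', Pi.star_apply]
    have e2 : (fun i => ((star (w • c)) i).im) = -b' := by
      funext i; simp [hb', Pi.star_apply]; ring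
    rw [e1, e2] at h1
    simp only [Complex.ofReal_re, neg_dotProduct] at h1
    rw [← ha', ← hb'] at h1
    linarith
  have hdiff' : a' ⬝ᵥ M *ᵥ a' - b' ⬝ᵥ M *ᵥ b' = t := by
    have h1 := pair_re g M (w • c) (w • c)
    rw [hT', ← ha', ← hb'] at h1
    simp only [Complex.ofReal_re] at h1
    linarith
  have hab' : a' ⬝ᵥ M *ᵥ b' = 0 := by
    have h1 := pair_im g M (w • c) (w • c)
    rw [hT', ← ha', ← hb'] at h1
    simp only [Complex.ofReal_im] at h1
    have h3 : b' ⬝ᵥ M *ᵥ a' = a' ⬝ᵥ M *ᵥ b' := Bsymm hM b' a'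
    linarith
  -- identify the matrix N
  have hMt : Mᵀ = M := by
    have := hM.eq
    rwa [conjTranspose_eq_transpose_of_trivial] at this
  have hNeq : (-(1/2 : ℂ) * T)⁻¹ • vecMulVec c c
      = (-(1/2 : ℂ) * (t : ℂ))⁻¹ • vecMulVec (w • c) (w • c) := by
    have htw : (t : ℂ) = w^2 * T := by
      rw [hw, div_mul_cancel₀ _ hT]
    ext i j
    simp only [Matrix.smul_apply, vecMulVec_apply, smul_eq_mul, Pi.smul_apply, htw]
    have h2 : -(1/2 : ℂ) * (w^2 * T) ≠ 0 := by
      apply mul_ne_zero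
      · norm_num
      · exact mul_ne_zero (pow_ne_zero 2 hw0) hT
    have h1 : -(1/2 : ℂ) * T ≠ 0 := by
      apply mul_ne_zero (by norm_num) hT
    field_simp
  set N : Matrix (Fin g) (Fin g) ℝ :=
    ((-(1/2 : ℂ) * T)⁻¹ • vecMulVec c c).map Complex.re with hNdef
  have hNherm : N.IsHermitian := by
    show Nᴴ = N
    rw [hNdef]
    ext i j
    simp only [conjTranspose_apply, Matrix.map_apply, Matrix.smul_apply, vecMulVec_apply,
      smul_eq_mul, star_trivial]
    rw [mul_comm (c j) (c i)]
  have hAherm : (M + M * N * M).IsHermitian := by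
    rw [IsHermitian, conjTranspose_add, hM.eq, conjTranspose_mul, conjTranspose_mul,
      hM.eq, hNherm.eq, mul_assoc]
  refine PosDef.of_dotProduct_mulVec_pos hAherm ?_
  intro x hx
  have hxstar : star x = x := by
    funext i; simp
  rw [hxstar]
  set p : Fin g → ℝ := M *ᵥ x with hp
  have hquad : x ⬝ᵥ (M + M * N * M) *ᵥ x
      = x ⬝ᵥ M *ᵥ x + p ⬝ᵥ N *ᵥ p := by
    rw [add_mulVec, dotProduct_add]
    congr 1
    rw [← mulVec_mulVec, ← mulVec_mulVec, dotProduct_mulVec, ← mulVec_transpose, hMt, hp]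
  have hNval : p ⬝ᵥ N *ᵥ p
      = (-2/t) * ((x ⬝ᵥ M *ᵥ a')^2 - (x ⬝ᵥ M *ᵥ b')^2) := by
    rw [hNdef, hNeq]
    rw [quad_N g (w • c) ((-(1/2 : ℂ) * (t : ℂ))⁻¹) p]
    have ht' : (t : ℂ) ≠ 0 := by exact_mod_cast ht.ne'
    have hz : (-(1/2 : ℂ) * (t : ℂ))⁻¹ = (((-2/t : ℝ)) : ℂ) := by
      have h2' : -(1/2 : ℂ) * (t:ℂ) ≠ 0 := mul_ne_zero (by norm_num) ht'
      push_cast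
      rw [eq_div_iff ht', inv_mul_eq_div, div_eq_iff h2']
      ring
    have hpa : p ⬝ᵥ a' = x ⬝ᵥ M *ᵥ a' := by
      rw [hp, dotProduct_comm, Bsymm hM a' x]
    have hpb : p ⬝ᵥ b' = x ⬝ᵥ M *ᵥ b' := by
      rw [hp, dotProduct_comm, Bsymm hM b' x]
    rw [hz, Complex.re_ofReal_mul, sq, Complex.mul_re, sum_re, sum_im, ← ha', ← hb',
      hpa, hpb]
    ring
  have mx := main_ineq g M hM i₀ hpos a' b' hab' (by linarith) (by rw [hdiff']; exact ht) x hx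
  rw [hdiff'] at mx
  rw [hquad, hNval]
  have heq : x ⬝ᵥ M *ᵥ x + -2 / t * ((x ⬝ᵥ M *ᵥ a') ^ 2 - (x ⬝ᵥ M *ᵥ b') ^ 2)
      = x ⬝ᵥ M *ᵥ x - 2 / t * ((x ⬝ᵥ M *ᵥ a') ^ 2 - (x ⬝ᵥ M *ᵥ b') ^ 2) := by
    ring
  rw [heq]
  exact mx
end

section
/- Let λ, μ > 0 be real and Re(s) > 0. Then ∫₀^∞ E(√(λt)) e^{−μt} t^{s−1} dt = (1/2) π^{−1/2} μ^{−s} Γ(s + 1/2) · B̃(πλ/μ; 1/2, 1/2 − s), where E(α) = ∫₀^α e^{−πu²} du and B̃(x;a,b) = ∫₀ˣ t^{a−1}(1+t)^{b−1} dt. -/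
open MeasureTheory Set Complex

lemma f_integrable (lam mu : ℝ) (hlam : 0 < lam) (hmu : 0 < mu) (s : ℂ) (hs : 0 < s.re) :
    Integrable (Function.uncurry (fun t v =>
        ((Real.sqrt lam * Real.sqrt t * Real.exp (-((mu + Real.pi*lam*v^2) * t)) : ℝ) : ℂ)
          * (t:ℂ)^(s-1)))
      ((volume.restrict (Ioi (0:ℝ))).prod (volume.restrict (Ioc (0:ℝ) 1))) := by
  set F := Function.uncurry (fun t v =>
        ((Real.sqrt lam * Real.sqrt t * Real.exp (-((mu + Real.pi*lam*v^2) * t)) : ℝ) : ℂ)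
          * (t:ℂ)^(s-1)) with hF
  have hmeas : AEStronglyMeasurable F
      ((volume.restrict (Ioi (0:ℝ))).prod (volume.restrict (Ioc (0:ℝ) 1))) := by
    rw [Measure.prod_restrict, ← Measure.volume_eq_prod]
    apply ContinuousOn.aestronglyMeasurable _ (measurableSet_Ioi.prod measurableSet_Ioc)
    apply ContinuousOn.mul
    · apply Continuous.continuousOn; fun_prop
    · intro p hp
      apply ContinuousAt.continuousWithinAt
      exact ContinuousAt.cpow (Complex.continuous_ofReal.comp continuous_fst).continuousAt
        continuousAt_const (ofReal_mem_slitPlane.2 hp.1)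
  rw [integrable_prod_iff hmeas]
  refine ⟨Filter.Eventually.of_forall fun t => ?_, ?_⟩
  · apply Continuous.integrableOn_Ioc
    simp only [hF, Function.uncurry]
    fun_prop
  · have hC : IntegrableOn (fun t : ℝ => Real.sqrt lam * (t ^ (s.re - 1/2) * Real.exp (-mu * t)))
        (Ioi (0:ℝ)) := by
      have h0 := integrableOn_rpow_mul_exp_neg_mul_rpow (p := 1) (s := s.re - 1/2) (b := mu)
        (by linarith) zero_lt_one hmu
      refine ((h0.congr_fun (fun x hx => ?_) measurableSet_Ioi).const_mul _)
      rw [Real.rpow_one]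
    refine (hC.mono' (hmeas.norm.integral_prod_right') ?_)
    filter_upwards [ae_restrict_mem measurableSet_Ioi] with t ht
    have ht' : (0:ℝ) < t := ht
    rw [Real.norm_of_nonneg (integral_nonneg fun v => norm_nonneg _)]
    have hb : ∀ v ∈ Ioc (0:ℝ) 1, ‖F (t, v)‖ ≤ Real.sqrt lam * (t ^ (s.re - 1/2) * Real.exp (-mu * t)) := by
      intro v hv
      simp only [hF, Function.uncurry, norm_mul, Complex.norm_real]
      rw [Complex.norm_cpow_eq_rpow_re_of_pos ht']
      have h1 : (s - 1).re = s.re - 1 := by simp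
      rw [h1, Real.norm_of_nonneg (Real.sqrt_nonneg lam), Real.norm_of_nonneg (Real.sqrt_nonneg t), Real.norm_of_nonneg (Real.exp_pos _).le]
      have h2 : Real.exp (-((mu + Real.pi*lam*v^2) * t)) ≤ Real.exp (-mu * t) := by
        apply Real.exp_le_exp.2
        have : 0 ≤ Real.pi * lam * v^2 * t := by positivity
        nlinarith
      have h3 : Real.sqrt t * t ^ (s.re - 1) = t ^ (s.re - 1/2) := by
        rw [Real.sqrt_eq_rpow, ← Real.rpow_add ht']; ring_nf
      calc Real.sqrt lam * Real.sqrt t * Real.exp (-((mu + Real.pi*lam*v^2) * t)) * t ^ (s.re - 1)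
          ≤ Real.sqrt lam * Real.sqrt t * Real.exp (-mu*t) * t ^ (s.re - 1) := by
            gcongr
        _ = Real.sqrt lam * (t ^ (s.re - 1/2) * Real.exp (-mu * t)) := by rw [← h3]; ring
    calc ∫ v in Ioc (0:ℝ) 1, ‖F (t, v)‖
        ≤ (Real.sqrt lam * (t ^ (s.re - 1/2) * Real.exp (-mu * t))) * (volume (Ioc (0:ℝ) 1)).toReal := by
          have := norm_setIntegral_le_of_norm_le_const_ae' (μ := volume) (s := Ioc (0:ℝ) 1)
            (f := fun v => ‖F (t, v)‖) (by simp)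
            (Filter.Eventually.of_forall fun v hv => by
              rw [Real.norm_of_nonneg (norm_nonneg _)]; exact hb v hv)
          calc ∫ v in Ioc (0:ℝ) 1, ‖F (t, v)‖ ≤ ‖∫ v in Ioc (0:ℝ) 1, ‖F (t, v)‖‖ := le_abs_self _
            _ ≤ _ := this
      _ = _ := by simp


lemma sqrt_cast_eq_cpow {t : ℝ} (ht : 0 ≤ t) : ((Real.sqrt t : ℝ) : ℂ) = (t:ℂ) ^ (1/2 : ℂ) := by
  rw [Real.sqrt_eq_rpow, Complex.ofReal_cpow ht]
  norm_num

lemma aux_gamma {s : ℂ} (hs : 0 < s.re) {r : ℝ} (hr : 0 < r) :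
    ∫ t in Set.Ioi (0:ℝ), (Real.sqrt t : ℂ) * (Real.exp (-(r * t)) : ℝ) * (t:ℂ) ^ (s - 1)
      = (r:ℂ) ^ (-(s + 1/2)) * Complex.Gamma (s + 1/2) := by
  have ha : 0 < (s + 1/2).re := by
    have : (s + 1/2).re = s.re + 1/2 := by simp [Complex.add_re]
    rw [this]; linarith
  have h := Complex.integral_cpow_mul_exp_neg_mul_Ioi ha hr
  rw [show ∫ t in Set.Ioi (0:ℝ), (Real.sqrt t : ℂ) * (Real.exp (-(r * t)) : ℝ) * (t:ℂ) ^ (s - 1)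
      = ∫ t in Set.Ioi (0:ℝ), (t:ℂ) ^ (s + 1/2 - 1) * Complex.exp (-(r * t)) from ?_, h]
  · rw [one_div, inv_cpow _ _ (by rw [Complex.arg_ofReal_of_nonneg hr.le]; exact Real.pi_ne_zero.symm),
      ← Complex.cpow_neg]
  · refine setIntegral_congr_fun measurableSet_Ioi fun t ht => ?_
    rw [mem_Ioi] at ht
    rw [sqrt_cast_eq_cpow ht.le, Complex.ofReal_exp]
    push_cast
    rw [mul_comm ((t:ℂ) ^ (1/2:ℂ)), mul_assoc, ← Complex.cpow_add _ _ (by exact_mod_cast ht.ne')]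
    ring_nf

lemma lhs_eq (lam mu : ℝ) (hlam : 0 < lam) (hmu : 0 < mu) (s : ℂ) (hs : 0 < s.re) :
    ∫ t in Set.Ioi (0:ℝ),
        (((∫ u in (0:ℝ)..Real.sqrt (lam * t), Real.exp (-Real.pi * u ^ 2)) : ℝ) : ℂ)
          * Real.exp (-mu * t) * (t : ℂ) ^ (s - 1)
      = (Real.sqrt lam : ℂ) * Complex.Gamma (s + 1/2)
          * ∫ v in Ioc (0:ℝ) 1, ((mu + Real.pi*lam*v^2 : ℝ):ℂ) ^ (-(s + 1/2)) := by
  set f : ℝ → ℝ → ℂ := fun t v =>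
      ((Real.sqrt lam * Real.sqrt t * Real.exp (-((mu + Real.pi*lam*v^2) * t)) : ℝ) : ℂ)
        * (t:ℂ)^(s-1) with hf
  have hfint : Integrable (Function.uncurry f)
      ((volume.restrict (Ioi (0:ℝ))).prod (volume.restrict (Ioc (0:ℝ) 1))) :=
    f_integrable lam mu hlam hmu s hs
  have step1 : ∫ t in Set.Ioi (0:ℝ),
        (((∫ u in (0:ℝ)..Real.sqrt (lam * t), Real.exp (-Real.pi * u ^ 2)) : ℝ) : ℂ)
          * Real.exp (-mu * t) * (t : ℂ) ^ (s - 1)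
      = ∫ t in Set.Ioi (0:ℝ), ∫ v in Ioc (0:ℝ) 1, f t v := by
    refine setIntegral_congr_fun measurableSet_Ioi fun t ht => ?_
    rw [mem_Ioi] at ht
    have hlt : (0:ℝ) ≤ lam * t := by positivity
    have hsub : ∫ u in (0:ℝ)..Real.sqrt (lam * t), Real.exp (-Real.pi * u ^ 2)
        = ∫ v in (0:ℝ)..1, Real.sqrt (lam * t) * Real.exp (-Real.pi * (Real.sqrt (lam*t) * v) ^ 2) := by
      have h := intervalIntegral.smul_integral_comp_mul_left (a := (0:ℝ)) (b := 1)
        (fun u => Real.exp (-Real.pi * u ^ 2)) (Real.sqrt (lam * t))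
      simp only [mul_zero, mul_one, smul_eq_mul] at h
      rw [← h, intervalIntegral.integral_const_mul]
    have hpt : ∀ v : ℝ, f t v
        = ((Real.sqrt (lam*t) * Real.exp (-Real.pi * (Real.sqrt (lam*t) * v) ^ 2) : ℝ) : ℂ)
          * ((Real.exp (-mu * t) : ℝ) : ℂ) * (t:ℂ)^(s-1) := by
      intro v
      simp only [hf]
      have : Real.sqrt lam * Real.sqrt t * Real.exp (-((mu + Real.pi*lam*v^2) * t))
          = Real.sqrt (lam*t) * Real.exp (-Real.pi * (Real.sqrt (lam*t) * v) ^ 2) * Real.exp (-mu * t) := by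
        have hexp : Real.exp (-((mu + Real.pi*lam*v^2) * t))
            = Real.exp (-Real.pi * (Real.sqrt (lam*t)*v)^2) * Real.exp (-mu*t) := by
          rw [← Real.exp_add]
          congr 1
          rw [mul_pow, Real.sq_sqrt hlt]
          ring
        rw [← Real.sqrt_mul hlam.le, hexp, mul_assoc]
      rw [this]
      push_cast
      ring
    calc (((∫ u in (0:ℝ)..Real.sqrt (lam * t), Real.exp (-Real.pi * u ^ 2)) : ℝ) : ℂ)
          * Real.exp (-mu * t) * (t : ℂ) ^ (s - 1)
        = (((∫ v in (0:ℝ)..1, Real.sqrt (lam*t) * Real.exp (-Real.pi * (Real.sqrt (lam*t)*v)^2)) : ℝ) : ℂ)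
          * Real.exp (-mu * t) * (t : ℂ) ^ (s - 1) := by rw [hsub]
      _ = (∫ v in (0:ℝ)..1, ((Real.sqrt (lam*t) * Real.exp (-Real.pi * (Real.sqrt (lam*t)*v)^2) : ℝ) : ℂ))
          * ((Real.exp (-mu * t) : ℝ) : ℂ) * (t : ℂ) ^ (s - 1) := by
            rw [intervalIntegral.integral_ofReal]
      _ = ∫ v in (0:ℝ)..1, ((Real.sqrt (lam*t) * Real.exp (-Real.pi * (Real.sqrt (lam*t)*v)^2) : ℝ) : ℂ)
          * ((Real.exp (-mu * t) : ℝ) : ℂ) * (t : ℂ) ^ (s - 1) := by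
            rw [intervalIntegral.integral_mul_const, intervalIntegral.integral_mul_const]
      _ = ∫ v in (0:ℝ)..1, f t v := by
            refine intervalIntegral.integral_congr fun v _ => ?_
            rw [hpt v]
      _ = ∫ v in Ioc (0:ℝ) 1, f t v := intervalIntegral.integral_of_le zero_le_one
  rw [step1, integral_integral_swap hfint]
  have step2 : ∀ v : ℝ, (∫ t in Set.Ioi (0:ℝ), f t v)
      = (Real.sqrt lam : ℂ) * Complex.Gamma (s + 1/2)
        * ((mu + Real.pi*lam*v^2 : ℝ):ℂ) ^ (-(s + 1/2)) := by
    intro v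
    have hr : (0:ℝ) < mu + Real.pi*lam*v^2 := by positivity
    have : ∀ t : ℝ, f t v = (Real.sqrt lam : ℂ) *
        ((Real.sqrt t : ℂ) * (Real.exp (-((mu + Real.pi*lam*v^2) * t)) : ℝ) * (t:ℂ)^(s-1)) := by
      intro t; simp only [hf]; push_cast; ring
    simp_rw [this]
    rw [integral_const_mul, aux_gamma hs hr]
    ring
  simp_rw [step2]
  rw [integral_const_mul]


lemma rhs_eq (lam mu : ℝ) (hlam : 0 < lam) (hmu : 0 < mu) (s : ℂ) :
    ∫ t in (0:ℝ)..(Real.pi * lam / mu),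
        (t : ℂ) ^ ((1/2 : ℂ) - 1) * ((1 : ℂ) + t) ^ ((1/2 - s) - 1)
    = 2 * (Real.sqrt (Real.pi * lam / mu) : ℂ) * (mu:ℂ) ^ (s + 1/2)
        * ∫ v in Ioc (0:ℝ) 1, ((mu + Real.pi*lam*v^2 : ℝ):ℂ) ^ (-(s + 1/2)) := by
  set c := Real.pi * lam / mu with hcdef
  have hc : 0 < c := by positivity
  set g : ℝ → ℂ := fun t => (t : ℂ) ^ ((1/2 : ℂ) - 1) * ((1 : ℂ) + t) ^ ((1/2 - s) - 1) with hg
  have himg : (fun v : ℝ => c * v ^ 2) '' Ioo 0 1 = Ioo 0 c := by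
    ext x
    simp only [mem_image, mem_Ioo]
    constructor
    · rintro ⟨v, ⟨hv0, hv1⟩, rfl⟩
      have hv2 : v^2 < 1 := by nlinarith
      exact ⟨by positivity, by nlinarith⟩
    · rintro ⟨hx0, hxc⟩
      refine ⟨Real.sqrt (x / c), ⟨Real.sqrt_pos.2 (by positivity), ?_⟩, ?_⟩
      · rw [show (1:ℝ) = Real.sqrt 1 by simp]
        exact Real.sqrt_lt_sqrt (by positivity) ((div_lt_one hc).2 hxc)
      · rw [Real.sq_sqrt (by positivity)]
        field_simp
  have hderiv : ∀ v ∈ Ioo (0:ℝ) 1, HasDerivWithinAt (fun v : ℝ => c * v ^ 2) (c * (2 * v)) (Ioo 0 1) v := by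
    intro v _
    have : HasDerivAt (fun v : ℝ => c * v ^ 2) (c * (2 * v)) v := by
      simpa using (hasDerivAt_pow 2 v).const_mul c
    exact this.hasDerivWithinAt
  have hinj : InjOn (fun v : ℝ => c * v ^ 2) (Ioo 0 1) := by
    intro a ha b hb hab
    simp only at hab
    have h2 : a ^ 2 = b ^ 2 := by
      field_simp [hc.ne'] at hab
      exact hab
    nlinarith [ha.1, hb.1]
  rw [intervalIntegral.integral_of_le hc.le, integral_Ioc_eq_integral_Ioo, ← himg,
    integral_image_eq_integral_abs_deriv_smul measurableSet_Ioo hderiv hinj g]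
  have hpt : ∀ v ∈ Ioo (0:ℝ) 1, |c * (2 * v)| • g (c * v ^ 2)
      = (2 * (Real.sqrt c : ℂ) * (mu:ℂ) ^ (s + 1/2))
        * ((mu + Real.pi*lam*v^2 : ℝ):ℂ) ^ (-(s + 1/2)) := by
    rintro v ⟨hv0, hv1⟩
    have hb : (0:ℝ) < mu + Real.pi*lam*v^2 := by positivity
    have e1 : ((1/2 : ℂ) - 1) = ((-(1/2) : ℝ) : ℂ) := by norm_num
    have habs : |c * (2 * v)| = c * (2 * v) := abs_of_pos (by positivity)
    have hterm1 : ((c * v ^ 2 : ℝ) : ℂ) ^ ((1/2 : ℂ) - 1)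
        = (((Real.sqrt c * v)⁻¹ : ℝ) : ℂ) := by
      rw [e1, ← Complex.ofReal_cpow (by positivity)]
      congr 1
      rw [Real.rpow_neg (by positivity), ← Real.sqrt_eq_rpow,
        Real.sqrt_mul hc.le, Real.sqrt_sq hv0.le]
    have hterm2 : ((1 : ℂ) + ((c * v ^ 2 : ℝ) : ℂ)) ^ ((1/2 - s) - 1)
        = ((mu + Real.pi*lam*v^2 : ℝ):ℂ) ^ (-(s + 1/2)) * ((mu:ℝ):ℂ) ^ (s + 1/2) := by
      have hbase : (1 : ℂ) + ((c * v ^ 2 : ℝ) : ℂ)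
          = (((mu + Real.pi*lam*v^2)/mu : ℝ) : ℂ) := by
        rw [hcdef]
        push_cast
        have : (mu:ℂ) ≠ 0 := by exact_mod_cast hmu.ne'
        field_simp
      have hW : ∀ w : ℂ, (((mu + Real.pi*lam*v^2)/mu : ℝ) : ℂ) ^ w
          = ((mu + Real.pi*lam*v^2 : ℝ):ℂ) ^ w * ((mu:ℝ):ℂ) ^ (-w) := by
        intro w
        have h1 := Complex.mul_cpow_ofReal_nonneg (div_nonneg hb.le hmu.le) hmu.le w
        rw [← Complex.ofReal_mul, div_mul_cancel₀ _ hmu.ne'] at h1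
        have h2 : ((mu:ℝ):ℂ) ^ w ≠ 0 := by
          rw [Ne, Complex.cpow_eq_zero_iff]
          push_neg
          intro h
          exact absurd h (by exact_mod_cast hmu.ne')
        rw [Complex.cpow_neg, h1]
        field_simp
      rw [hbase, show ((1/2 : ℂ) - s - 1) = -(s + 1/2) by ring, hW, neg_neg]
    have hre : (c * (2 * v)) * (Real.sqrt c * v)⁻¹ = 2 * Real.sqrt c := by
      have hcs : Real.sqrt c * Real.sqrt c = c := Real.mul_self_sqrt hc.le
      have h1 : Real.sqrt c ≠ 0 := (Real.sqrt_pos.2 hc).ne'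
      field_simp
      nlinarith [hcs]
    calc |c * (2 * v)| • g (c * v ^ 2)
        = ((c * (2 * v) : ℝ) : ℂ) * ((((Real.sqrt c * v)⁻¹ : ℝ) : ℂ)
            * (((mu + Real.pi*lam*v^2 : ℝ):ℂ) ^ (-(s + 1/2)) * ((mu:ℝ):ℂ) ^ (s + 1/2))) := by
          rw [habs, hg]
          simp only []
          rw [hterm1, hterm2, Complex.real_smul]
      _ = (((c * (2 * v)) * (Real.sqrt c * v)⁻¹ : ℝ) : ℂ)
            * (((mu + Real.pi*lam*v^2 : ℝ):ℂ) ^ (-(s + 1/2)) * ((mu:ℝ):ℂ) ^ (s + 1/2)) := by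
          push_cast
          ring
      _ = _ := by
          rw [hre]
          push_cast
          ring
  rw [setIntegral_congr_fun measurableSet_Ioo hpt, integral_const_mul,
    ← integral_Ioc_eq_integral_Ioo]


/-- Mellin-type integral of the incomplete Gaussian error integral:
∫₀^∞ E(√(λt)) e^{−μt} t^{s−1} dt = (1/2)π^{−1/2}μ^{−s}Γ(s+1/2)·B̃(πλ/μ; 1/2, 1/2−s). -/
theorem mellin_error_integral (lam mu : ℝ) (hlam : 0 < lam) (hmu : 0 < mu)
    (s : ℂ) (hs : 0 < s.re) :
    ∫ t in Set.Ioi (0:ℝ),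
        (((∫ u in (0:ℝ)..Real.sqrt (lam * t), Real.exp (-Real.pi * u ^ 2)) : ℝ) : ℂ)
          * Real.exp (-mu * t) * (t : ℂ) ^ (s - 1)
      = (1 / 2) * (Real.pi : ℂ) ^ (-(1/2) : ℂ) * (mu : ℂ) ^ (-s)
          * Complex.Gamma (s + 1/2)
          * ∫ t in (0:ℝ)..(Real.pi * lam / mu),
              (t : ℂ) ^ ((1/2 : ℂ) - 1) * ((1 : ℂ) + t) ^ ((1/2 - s) - 1) := by
  rw [lhs_eq lam mu hlam hmu s hs, rhs_eq lam mu hlam hmu s]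
  set K := ∫ v in Ioc (0:ℝ) 1, ((mu + Real.pi*lam*v^2 : ℝ):ℂ) ^ (-(s + 1/2)) with hK
  set G := Complex.Gamma (s + 1/2) with hG
  have hmu0 : (mu : ℂ) ≠ 0 := by exact_mod_cast hmu.ne'
  have h1 : (mu:ℂ)^(-s) * (mu:ℂ)^(s+1/2) = ((Real.sqrt mu : ℝ):ℂ) := by
    rw [← Complex.cpow_add _ _ hmu0, show -s + (s+1/2) = (1/2:ℂ) by ring,
      ← sqrt_cast_eq_cpow hmu.le]
  have h2 : (Real.pi:ℂ)^(-(1/2):ℂ) = ((Real.sqrt Real.pi : ℝ):ℂ)⁻¹ := by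
    rw [Complex.cpow_neg, ← sqrt_cast_eq_cpow Real.pi_pos.le]
  have h3 : Real.sqrt (Real.pi*lam/mu) = Real.sqrt Real.pi * Real.sqrt lam / Real.sqrt mu := by
    rw [Real.sqrt_div (by positivity), Real.sqrt_mul Real.pi_pos.le]
  have hscal : (1/2 : ℂ) * (Real.pi : ℂ) ^ (-(1/2):ℂ) * (mu:ℂ)^(-s)
      * (2 * ((Real.sqrt (Real.pi*lam/mu) : ℝ):ℂ) * (mu:ℂ)^(s+1/2))
      = ((Real.sqrt lam : ℝ):ℂ) := by
    have hrearr : (1/2 : ℂ) * (Real.pi : ℂ) ^ (-(1/2):ℂ) * (mu:ℂ)^(-s)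
        * (2 * ((Real.sqrt (Real.pi*lam/mu) : ℝ):ℂ) * (mu:ℂ)^(s+1/2))
        = (Real.pi : ℂ) ^ (-(1/2):ℂ) * ((Real.sqrt (Real.pi*lam/mu) : ℝ):ℂ)
          * ((mu:ℂ)^(-s) * (mu:ℂ)^(s+1/2)) := by ring
    rw [hrearr, h1, h2, h3]
    rw [show (((Real.sqrt Real.pi * Real.sqrt lam / Real.sqrt mu : ℝ)):ℂ)
        = (Real.sqrt Real.pi : ℝ) * (Real.sqrt lam : ℝ) / (Real.sqrt mu : ℝ) by push_cast; ring]
    have hπ : ((Real.sqrt Real.pi : ℝ):ℂ) ≠ 0 := by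
      exact_mod_cast (Real.sqrt_pos.2 Real.pi_pos).ne'
    have hμ : ((Real.sqrt mu : ℝ):ℂ) ≠ 0 := by
      exact_mod_cast (Real.sqrt_pos.2 hmu).ne'
    field_simp
  linear_combination (G * K) * hscal.symm
end

section
/- If Re(c) > Re(a+b) and c is not a nonpositive integer, then the hypergeometric series at z = 1 converges and ₂F₁(a, b; c; 1) = Γ(c)Γ(c−a−b)/(Γ(c−a)Γ(c−b)). -/
open Filter Topology Finset Polynomial
noncomputable section
namespace GaussAux


/-- shorthand -/
def P (x : ℂ) (n : ℕ) : ℂ := (ascPochhammer ℂ n).eval x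

lemma P_succ (x : ℂ) (n : ℕ) : P x (n + 1) = P x n * (x + n) :=
  ascPochhammer_succ_eval n x

lemma P_zero (x : ℂ) : P x 0 = 1 := by simp [P]

lemma P_one_eval (n : ℕ) : P 1 n = n.factorial := by
  simpa [P] using ascPochhammer_eval_one ℂ n

lemma P_prod (x : ℂ) (n : ℕ) : P x n = ∏ j ∈ Finset.range n, (x + j) := by
  induction n with
  | zero => simp [P_zero]
  | succ n ih => rw [P_succ, ih, Finset.prod_range_succ]

lemma P_ne_zero {c : ℂ} (hc : ∀ n : ℕ, c ≠ -(n : ℂ)) (n : ℕ) : P c n ≠ 0 := by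
  intro h
  rw [P, ascPochhammer_eval_eq_zero_iff] at h
  obtain ⟨k, _, hk⟩ := h
  exact hc k (by linear_combination hk)

lemma P_succ_left (x : ℂ) (n : ℕ) : P x (n + 1) = x * P (x + 1) n := by
  rw [P, ascPochhammer_succ_left, Polynomial.eval_mul, Polynomial.eval_X, P,
    Polynomial.eval_comp]
  simp

lemma one_avoid : ∀ k : ℕ, (1 : ℂ) ≠ -(k : ℕ) := by
  intro k h
  have : (1 : ℂ).re = (-(k:ℂ)).re := by rw [h]
  simp at this
  linarith [Nat.cast_nonneg (α := ℝ) k]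

lemma add_nat_ne_zero {s : ℂ} (hs : ∀ k : ℕ, s ≠ -(k : ℂ)) (m : ℕ) : s + m ≠ 0 := by
  intro h
  exact hs m (by linear_combination h)

lemma poch_mul_gammaSeq {s : ℂ} (hs : ∀ k : ℕ, s ≠ -(k : ℂ)) (m : ℕ) :
    P s m * ((s + m) * Complex.GammaSeq s m) = (m : ℂ) ^ s * m.factorial := by
  have hprod : ∏ j ∈ Finset.range (m + 1), (s + j) = P s m * (s + m) := by
    rw [P_prod, Finset.prod_range_succ]
  have h1 : P s m * (s + m) ≠ 0 :=
    mul_ne_zero (P_ne_zero hs m) (add_nat_ne_zero hs m)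
  rw [Complex.GammaSeq, hprod]
  field_simp
  have h1' : P s m * s + P s m * m ≠ 0 := by rw [← mul_add]; exact h1
  linear_combination ((m : ℂ) ^ s * m.factorial) * (mul_inv_cancel₀ h1')

lemma gammaSeq_ne_zero {s : ℂ} (hs : ∀ k : ℕ, s ≠ -(k : ℂ)) {m : ℕ} (hm : 1 ≤ m) :
    Complex.GammaSeq s m ≠ 0 := by
  have h := poch_mul_gammaSeq hs m
  have hm' : (m : ℂ) ≠ 0 := Nat.cast_ne_zero.mpr (by omega)
  have : (m : ℂ) ^ s * m.factorial ≠ 0 := by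
    apply mul_ne_zero
    · simp [Complex.cpow_eq_zero_iff, hm']
    · exact_mod_cast Nat.cast_ne_zero.mpr m.factorial_ne_zero
  intro h0
  rw [h0, mul_zero, mul_zero] at h
  exact this h.symm

/-- `(z+n)/(w+n) → 1`. -/
lemma tendsto_ratio_one (z w : ℂ) :
    Tendsto (fun n : ℕ => (z + n) / (w + n)) atTop (𝓝 1) := by
  have hnorm : Tendsto (fun n : ℕ => ‖(z - w) / (w + n)‖) atTop (𝓝 0) := by
    apply squeeze_zero' (Eventually.of_forall fun n => norm_nonneg _)
      (g := fun n : ℕ => ‖z - w‖ / (n - ‖w‖))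
    · filter_upwards [eventually_ge_atTop (⌈‖w‖⌉₊ + 1)] with n hn
      have h1 : (0:ℝ) < n - ‖w‖ := by
        have : ‖w‖ ≤ (⌈‖w‖⌉₊ : ℝ) := Nat.le_ceil _
        have h2 : ((⌈‖w‖⌉₊ + 1 : ℕ) : ℝ) ≤ n := by exact_mod_cast Nat.cast_le.mpr hn
        push_cast at h2
        linarith
      have h2 : n - ‖w‖ ≤ ‖w + n‖ := by
        have := norm_le_add_norm_add (n:ℂ) w
        have hnn : ‖(n:ℂ)‖ = (n:ℝ) := by simp
        rw [hnn] at this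
        have hcomm : ‖(n:ℂ) + w‖ = ‖w + (n:ℂ)‖ := by rw [add_comm]
        rw [hcomm] at this
        linarith
      rw [norm_div]
      exact div_le_div_of_nonneg_left (norm_nonneg _) h1 h2 |>.trans_eq rfl
    · apply Tendsto.div_atTop tendsto_const_nhds
      apply tendsto_atTop_add_const_right
      exact tendsto_natCast_atTop_atTop
  have hzero : Tendsto (fun n : ℕ => (z - w) / (w + n)) atTop (𝓝 0) :=
    tendsto_zero_iff_norm_tendsto_zero.mpr hnorm
  have heq : ∀ᶠ n : ℕ in atTop, 1 + (z - w) / (w + n) = (z + n) / (w + n) := by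
    filter_upwards [eventually_ge_atTop (⌈‖w‖⌉₊ + 1)] with n hn
    have hne : w + (n:ℂ) ≠ 0 := by
      intro h0
      have : ‖w‖ = (n:ℝ) := by
        have : w = -(n:ℂ) := by linear_combination h0
        rw [this]; simp
      have h2 : ((⌈‖w‖⌉₊ + 1 : ℕ) : ℝ) ≤ n := by exact_mod_cast Nat.cast_le.mpr hn
      have : ‖w‖ ≤ (⌈‖w‖⌉₊:ℝ) := Nat.le_ceil _
      push_cast at h2
      linarith [this, h2]
    field_simp
    ring
  have := (tendsto_const_nhds (x := (1:ℂ)) (f := atTop)).add hzero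
  rw [add_zero] at this
  exact this.congr' heq

/-- The core asymptotic lemma. -/
lemma key_tendsto {x y z w : ℂ} (hx : ∀ k : ℕ, x ≠ -(k : ℂ)) (hy : ∀ k : ℕ, y ≠ -(k : ℂ))
    (hz : ∀ k : ℕ, z ≠ -(k : ℂ)) (hw : ∀ k : ℕ, w ≠ -(k : ℂ)) :
    Tendsto (fun m : ℕ => P x m * P y m / (P z m * P w m) * (m : ℂ) ^ (z + w - x - y)) atTop
      (𝓝 (Complex.Gamma z * Complex.Gamma w / (Complex.Gamma x * Complex.Gamma y))) := by
  set g : ℕ → ℂ := fun m =>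
    Complex.GammaSeq z m * Complex.GammaSeq w m * ((z + m) * (w + m) / ((x + m) * (y + m))) /
      (Complex.GammaSeq x m * Complex.GammaSeq y m) with hg
  have hxG : Complex.Gamma x ≠ 0 := Complex.Gamma_ne_zero hx
  have hyG : Complex.Gamma y ≠ 0 := Complex.Gamma_ne_zero hy
  have hratio : Tendsto (fun m : ℕ => (z + m) * (w + m) / ((x + m) * (y + m))) atTop (𝓝 1) := by
    have := (tendsto_ratio_one z x).mul (tendsto_ratio_one w y)
    rw [mul_one] at this
    refine this.congr fun m => ?_
    rw [div_mul_div_comm]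
  have hgt : Tendsto g atTop
      (𝓝 (Complex.Gamma z * Complex.Gamma w / (Complex.Gamma x * Complex.Gamma y))) := by
    have hnum := ((Complex.GammaSeq_tendsto_Gamma z).mul
      (Complex.GammaSeq_tendsto_Gamma w)).mul hratio
    rw [mul_one] at hnum
    exact hnum.div ((Complex.GammaSeq_tendsto_Gamma x).mul (Complex.GammaSeq_tendsto_Gamma y))
      (mul_ne_zero hxG hyG)
  refine hgt.congr' ?_
  filter_upwards [eventually_ge_atTop 1] with m hm
  have hm0 : (m : ℂ) ≠ 0 := Nat.cast_ne_zero.mpr (by omega)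
  have hfac : (m.factorial : ℂ) ≠ 0 := Nat.cast_ne_zero.mpr m.factorial_ne_zero
  have h1 := poch_mul_gammaSeq hx m
  have h2 := poch_mul_gammaSeq hy m
  have h3 := poch_mul_gammaSeq hz m
  have h4 := poch_mul_gammaSeq hw m
  have hpow : (m : ℂ) ^ x * (m : ℂ) ^ y * (m : ℂ) ^ (z + w - x - y)
      = (m : ℂ) ^ z * (m : ℂ) ^ w := by
    rw [← Complex.cpow_add _ _ hm0, ← Complex.cpow_add _ _ hm0, ← Complex.cpow_add _ _ hm0]
    congr 1; ring
  have hPx := P_ne_zero hx m; have hPy := P_ne_zero hy m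
  have hPz := P_ne_zero hz m; have hPw := P_ne_zero hw m
  have hGx := gammaSeq_ne_zero hx hm; have hGy := gammaSeq_ne_zero hy hm
  have hGz := gammaSeq_ne_zero hz hm; have hGw := gammaSeq_ne_zero hw hm
  have hax := add_nat_ne_zero hx m; have hay := add_nat_ne_zero hy m
  have haz := add_nat_ne_zero hz m; have haw := add_nat_ne_zero hw m
  have hcz : (m:ℂ) ^ z ≠ 0 := by simp [Complex.cpow_eq_zero_iff, hm0]
  have hcw : (m:ℂ) ^ w ≠ 0 := by simp [Complex.cpow_eq_zero_iff, hm0]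
  set F : ℂ := (x + m) * Complex.GammaSeq x m * ((y + m) * Complex.GammaSeq y m)
      * (P z m * P w m) with hF
  have hFne : F ≠ 0 := by
    apply mul_ne_zero (mul_ne_zero (mul_ne_zero hax hGx) (mul_ne_zero hay hGy))
      (mul_ne_zero hPz hPw)
  apply mul_right_cancel₀ hFne
  have hA : P x m * P y m / (P z m * P w m) * (m : ℂ) ^ (z + w - x - y) * F
      = (P x m * ((x + m) * Complex.GammaSeq x m)) * (P y m * ((y + m) * Complex.GammaSeq y m))
        * (m : ℂ) ^ (z + w - x - y) := by
    rw [hF]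
    field_simp
  have hB : g m * F
      = (P z m * ((z + m) * Complex.GammaSeq z m)) * (P w m * ((w + m) * Complex.GammaSeq w m)) := by
    rw [hg, hF]
    field_simp
  rw [hB, hA, h1, h2, h3, h4]
  linear_combination (-(m.factorial : ℂ) * (m.factorial : ℂ)) * hpow

/-- The hypergeometric term. -/
def U (a b c : ℂ) (n : ℕ) : ℂ := P a n * P b n / (P c n * n.factorial)

lemma U_zero (a b c : ℂ) : U a b c 0 = 1 := by simp [U, P_zero]

lemma P_eq_zero_of_deg {a : ℂ} {k : ℕ} (ha : a = -(k : ℂ)) {n : ℕ} (hn : k < n) :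
    P a n = 0 := by
  rw [P, ascPochhammer_eval_eq_zero_iff]
  exact ⟨k, hn, by rw [ha]; simp⟩

lemma U_tendsto {a b c : ℂ} (ha : ∀ k : ℕ, a ≠ -(k : ℂ)) (hb : ∀ k : ℕ, b ≠ -(k : ℂ))
    (hc : ∀ k : ℕ, c ≠ -(k : ℂ)) :
    Tendsto (fun n : ℕ => U a b c n * (n : ℂ) ^ (c + 1 - a - b)) atTop
      (𝓝 (Complex.Gamma c * Complex.Gamma 1 / (Complex.Gamma a * Complex.Gamma b))) := by
  have := key_tendsto ha hb hc one_avoid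
  refine this.congr fun n => ?_
  rw [U, P_one_eval]

lemma U_norm_eq {a b c : ℂ} (n : ℕ) (hn : 1 ≤ n) :
    ‖U a b c n‖ = ‖U a b c n * (n : ℂ) ^ (c + 1 - a - b)‖ * (n : ℝ) ^ (-(c + 1 - a - b).re) := by
  have hn' : (0:ℝ) < n := by exact_mod_cast hn
  have hcast : ((n:ℂ)) = ((n:ℝ):ℂ) := by push_cast; ring
  rw [norm_mul, hcast,
    Complex.norm_cpow_eq_rpow_re_of_pos hn',
    mul_assoc, ← Real.rpow_add hn', add_neg_cancel, Real.rpow_zero, mul_one]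

lemma summable_U {a b c : ℂ} (hc : ∀ n : ℕ, c ≠ -(n : ℂ)) (h : (a + b).re < c.re) :
    Summable (U a b c) := by
  by_cases ha : ∃ k : ℕ, a = -(k : ℂ)
  · obtain ⟨k, hk⟩ := ha
    apply summable_of_ne_finset_zero (s := Finset.range (k + 1))
    intro n hn
    rw [Finset.mem_range, not_lt] at hn
    rw [U, P_eq_zero_of_deg hk (by omega), zero_mul, zero_div]
  by_cases hb : ∃ k : ℕ, b = -(k : ℂ)
  · obtain ⟨k, hk⟩ := hb
    apply summable_of_ne_finset_zero (s := Finset.range (k + 1))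
    intro n hn
    rw [Finset.mem_range, not_lt] at hn
    rw [U, P_eq_zero_of_deg hk (by omega), mul_zero, zero_div]
  push_neg at ha hb
  have ht := U_tendsto ha hb hc
  set L := Complex.Gamma c * Complex.Gamma 1 / (Complex.Gamma a * Complex.Gamma b) with hL
  have hev : ∀ᶠ n : ℕ in atTop, ‖U a b c n * (n : ℂ) ^ (c + 1 - a - b)‖ ≤ ‖L‖ + 1 :=
    ht.norm.eventually_le_const (by linarith [norm_nonneg L])
  have hre : (-(c + 1 - a - b).re) < -1 := by
    have h' : a.re + b.re < c.re := by simpa [Complex.add_re] using h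
    simp only [Complex.sub_re, Complex.add_re, Complex.one_re]
    linarith
  have hgsum : Summable (fun n : ℕ => (‖L‖ + 1) * (n : ℝ) ^ (-(c + 1 - a - b).re)) :=
    (Real.summable_nat_rpow.mpr hre).mul_left _
  apply Summable.of_norm_bounded_eventually_nat hgsum
  filter_upwards [hev, eventually_ge_atTop 1] with n h1 h2
  rw [U_norm_eq n h2]
  have : (0:ℝ) ≤ (n : ℝ) ^ (-(c + 1 - a - b).re) := Real.rpow_nonneg (by positivity) _
  exact mul_le_mul_of_nonneg_right h1 this

lemma tendsto_nat_mul_U {a b c : ℂ} (hc : ∀ n : ℕ, c ≠ -(n : ℂ)) (h : (a + b).re < c.re) :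
    Tendsto (fun n : ℕ => (n : ℂ) * U a b c n) atTop (𝓝 0) := by
  by_cases ha : ∃ k : ℕ, a = -(k : ℂ)
  · obtain ⟨k, hk⟩ := ha
    apply Tendsto.congr' (f₁ := fun _ => (0:ℂ)) _ tendsto_const_nhds
    filter_upwards [eventually_ge_atTop (k+1)] with n hn
    rw [U, P_eq_zero_of_deg hk (by omega), zero_mul, zero_div, mul_zero]
  by_cases hb : ∃ k : ℕ, b = -(k : ℂ)
  · obtain ⟨k, hk⟩ := hb
    apply Tendsto.congr' (f₁ := fun _ => (0:ℂ)) _ tendsto_const_nhds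
    filter_upwards [eventually_ge_atTop (k+1)] with n hn
    rw [U, P_eq_zero_of_deg hk (by omega), mul_zero, zero_div, mul_zero]
  push_neg at ha hb
  have ht := U_tendsto ha hb hc
  have hzero : Tendsto (fun n : ℕ => (n : ℂ) ^ (a + b - c)) atTop (𝓝 0) := by
    rw [tendsto_zero_iff_norm_tendsto_zero]
    have hneg : (0:ℝ) < -(a + b - c).re := by
      simp only [Complex.sub_re, Complex.add_re] at h ⊢
      linarith
    have hr : Tendsto (fun x : ℝ => x ^ (-(-(a+b-c).re))) atTop (𝓝 0) :=
      tendsto_rpow_neg_atTop hneg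
    rw [neg_neg] at hr
    apply Tendsto.congr' _ (hr.comp tendsto_natCast_atTop_atTop)
    filter_upwards [eventually_ge_atTop 1] with n hn
    have hn' : (0:ℝ) < n := by exact_mod_cast hn
    have hcast : ((n:ℂ)) = ((n:ℝ):ℂ) := by push_cast; ring
    rw [Function.comp_apply, hcast,
      Complex.norm_cpow_eq_rpow_re_of_pos hn']
  have := ht.mul hzero
  rw [mul_zero] at this
  apply this.congr'
  filter_upwards [eventually_ge_atTop 1] with n hn
  have hn0 : (n:ℂ) ≠ 0 := Nat.cast_ne_zero.mpr (by omega)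
  rw [mul_assoc, ← Complex.cpow_add _ _ hn0,
    show c + 1 - a - b + (a + b - c) = 1 by ring, Complex.cpow_one]
  ring

lemma avoid_succ {c : ℂ} (hc : ∀ n : ℕ, c ≠ -(n : ℂ)) : ∀ n : ℕ, c + 1 ≠ -(n : ℂ) := by
  intro n h
  apply hc (n + 1)
  push_cast
  linear_combination h

lemma re_lt_succ {a b c : ℂ} (h : (a + b).re < c.re) : (a + b).re < (c + 1).re := by
  have h' : a.re + b.re < c.re := by rw [Complex.add_re] at h; exact h
  simp only [Complex.add_re, Complex.one_re]
  linarith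

/-- Gauss's contiguous relation at `z = 1`. -/
lemma contiguous (a b c : ℂ) (hc : ∀ n : ℕ, c ≠ -(n : ℂ)) (h : (a + b).re < c.re) :
    c * (c - a - b) * ∑' n, U a b c n = (c - a) * (c - b) * ∑' n, U a b (c + 1) n := by
  have hc1 := avoid_succ hc
  have h1 := re_lt_succ h
  have S0 := summable_U hc h
  have S1 := summable_U hc1 h1
  have hc0 : c ≠ 0 := by simpa using hc 0
  set B : ℕ → ℂ := fun n => c * n * U a b c n with hB
  have hw : ∀ n : ℕ, c * (c - a - b) * U a b c n - (c - a) * (c - b) * U a b (c + 1) n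
      = B n - B (n + 1) := by
    intro n
    have hPc := P_ne_zero hc n
    have hPc1 := P_ne_zero hc1 n
    have hcn : c + (n:ℂ) ≠ 0 := add_nat_ne_zero hc n
    have hfac : (n.factorial : ℂ) ≠ 0 := Nat.cast_ne_zero.mpr n.factorial_ne_zero
    have hn1 : ((n:ℂ) + 1) ≠ 0 := by
      have : ((n+1 : ℕ):ℂ) ≠ 0 := Nat.cast_ne_zero.mpr (by omega)
      push_cast at this
      exact this
    have hrel : P (c+1) n = P c n * (c + n) / c := by
      rw [eq_div_iff hc0]
      have s1 := P_succ c n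
      have s2 := P_succ_left c n
      linear_combination s1 - s2
    have hfacs : ((n+1).factorial : ℂ) = ((n:ℂ) + 1) * n.factorial := by
      rw [Nat.factorial_succ]
      push_cast
      ring
    rw [hB]
    simp only [U, P_succ, hfacs, hrel]
    push_cast
    field_simp
    ring
  have hsumw : Summable (fun n => c * (c - a - b) * U a b c n
      - (c - a) * (c - b) * U a b (c + 1) n) := (S0.mul_left _).sub (S1.mul_left _)
  have hpart : ∀ N : ℕ, ∑ n ∈ Finset.range N,
      (c * (c - a - b) * U a b c n - (c - a) * (c - b) * U a b (c + 1) n) = -B N := by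
    intro N
    calc ∑ n ∈ Finset.range N, (c * (c - a - b) * U a b c n - (c - a) * (c - b) * U a b (c+1) n)
        = ∑ n ∈ Finset.range N, (B n - B (n+1)) := Finset.sum_congr rfl fun n _ => hw n
      _ = B 0 - B N := Finset.sum_range_sub' B N
      _ = -B N := by rw [hB]; simp
  have hBlim : Tendsto B atTop (𝓝 0) := by
    have := (tendsto_nat_mul_U hc h).const_mul c
    rw [mul_zero] at this
    refine this.congr fun n => ?_
    rw [hB]; ring
  have htsum0 : ∑' n, (c * (c - a - b) * U a b c n - (c - a) * (c - b) * U a b (c + 1) n) = 0 := by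
    have h1' := hsumw.hasSum.tendsto_sum_nat
    have h2' : Tendsto (fun N => ∑ n ∈ Finset.range N,
        (c * (c - a - b) * U a b c n - (c - a) * (c - b) * U a b (c + 1) n)) atTop (𝓝 0) := by
      have := hBlim.neg
      rw [neg_zero] at this
      exact this.congr fun N => (hpart N).symm
    exact tendsto_nhds_unique h1' h2'
  rw [Summable.tsum_sub (S0.mul_left _) (S1.mul_left _), tsum_mul_left, tsum_mul_left] at htsum0
  linear_combination htsum0


/-- real Pochhammer -/
def R (x : ℝ) (n : ℕ) : ℝ := (ascPochhammer ℝ n).eval x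

lemma R_succ (x : ℝ) (n : ℕ) : R x (n + 1) = R x n * (x + n) := ascPochhammer_succ_eval n x

lemma R_succ_left (x : ℝ) (n : ℕ) : R x (n + 1) = x * R (x + 1) n := by
  rw [R, ascPochhammer_succ_left, Polynomial.eval_mul, Polynomial.eval_X, R,
    Polynomial.eval_comp]
  simp

lemma R_nonneg {x : ℝ} (hx : 0 ≤ x) (n : ℕ) : 0 ≤ R x n := by
  induction n with
  | zero => simp [R]
  | succ n ih => rw [R_succ]; positivity

lemma R_pos {x : ℝ} (hx : 0 < x) (n : ℕ) : 0 < R x n := ascPochhammer_pos n x hx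

lemma R_mono {x y : ℝ} (hx : 0 ≤ x) (hxy : x ≤ y) (n : ℕ) : R x n ≤ R y n := by
  induction n with
  | zero => simp [R]
  | succ n ih =>
    rw [R_succ, R_succ]
    apply mul_le_mul ih (by linarith) (by positivity) (R_nonneg (by linarith) n)

lemma normP_le (a : ℂ) (n : ℕ) : ‖P a n‖ ≤ R ‖a‖ n := by
  induction n with
  | zero => simp [P, R]
  | succ n ih =>
    rw [P, ascPochhammer_succ_eval, R_succ]
    rw [norm_mul]
    apply mul_le_mul ih _ (norm_nonneg _) (R_nonneg (norm_nonneg a) n)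
    calc ‖a + (n:ℂ)‖ ≤ ‖a‖ + ‖(n:ℂ)‖ := norm_add_le _ _
      _ = ‖a‖ + n := by simp

lemma normP_ge {z : ℂ} (hz : 0 ≤ z.re) (n : ℕ) : R z.re n ≤ ‖P z n‖ := by
  induction n with
  | zero => simp [P, R]
  | succ n ih =>
    rw [P, ascPochhammer_succ_eval, R_succ, norm_mul]
    apply mul_le_mul ih _ _ (norm_nonneg _)
    · calc z.re + (n:ℝ) ≤ (z + n).re := by simp [Complex.add_re]
        _ ≤ ‖z + (n:ℂ)‖ := Complex.re_le_norm _
    · positivity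

lemma P_real_cast (x : ℝ) (n : ℕ) : P ((x : ℝ) : ℂ) n = ((R x n : ℝ) : ℂ) := by
  induction n with
  | zero => simp [P, R]
  | succ n ih =>
    rw [P, ascPochhammer_succ_eval, R_succ, ← P, ih]
    push_cast
    ring

lemma avoid_add {c : ℂ} (hc : ∀ n : ℕ, c ≠ -(n : ℂ)) (m : ℕ) :
    ∀ n : ℕ, c + m ≠ -(n : ℂ) := by
  intro n hn
  apply hc (n + m)
  push_cast
  linear_combination hn

lemma re_add_nat (c : ℂ) (m : ℕ) : (c + (m:ℂ)).re = c.re + m := by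
  simp [Complex.add_re]

lemma re_lt_add {a b c : ℂ} (h : (a + b).re < c.re) (m : ℕ) : (a + b).re < (c + m).re := by
  rw [re_add_nat]
  have : (0:ℝ) ≤ m := Nat.cast_nonneg m
  linarith

/-- `F(a,b;c+m;1) → 1` as `m → ∞`. -/
lemma tendsto_F_one {a b c : ℂ} (hc : ∀ n : ℕ, c ≠ -(n : ℂ)) (h : (a + b).re < c.re) :
    Tendsto (fun m : ℕ => ∑' n, U a b (c + m) n) atTop (𝓝 1) := by
  set p := ‖a‖ with hp
  set q := ‖b‖ with hq
  set m0 := ⌈p + q + 2 - c.re⌉₊ with hm0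
  set r := c.re + m0 with hr
  have hple : p + q + 2 - c.re ≤ (m0 : ℝ) := Nat.le_ceil _
  have hr2 : p + q + 2 ≤ r := by rw [hr]; linarith
  have hppos : 0 ≤ p := norm_nonneg a
  have hqpos : 0 ≤ q := norm_nonneg b
  have hrpos : (0:ℝ) < r := by linarith
  have hrc : ∀ k : ℕ, ((r : ℝ) : ℂ) ≠ -(k : ℂ) := by
    intro k hk
    have : r = -(k:ℝ) := by exact_mod_cast hk
    have : (0:ℝ) ≤ (k:ℝ) := Nat.cast_nonneg k
    linarith [hrpos, ‹r = -(k:ℝ)›]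
  have hsumcond : (((p:ℝ):ℂ) + ((q:ℝ):ℂ)).re < ((r:ℝ):ℂ).re := by
    simp only [Complex.add_re, Complex.ofReal_re]
    linarith
  have S : Summable (U ((p:ℝ):ℂ) ((q:ℝ):ℂ) ((r:ℝ):ℂ)) := summable_U hrc hsumcond
  set T : ℕ → ℝ := fun n => R p n * R q n / (R r n * n.factorial) with hT
  have hTU : ∀ n, ((T n : ℝ) : ℂ) = U ((p:ℝ):ℂ) ((q:ℝ):ℂ) ((r:ℝ):ℂ) n := by
    intro n
    rw [hT, U, P_real_cast, P_real_cast, P_real_cast]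
    push_cast
    ring
  have hTsum : Summable T := by
    exact Complex.summable_ofReal.mp (S.congr fun n => (hTU n).symm)
  have hTnonneg : ∀ n, 0 ≤ T n := by
    intro n
    rw [hT]
    have := R_nonneg hppos n
    have := R_nonneg hqpos n
    have := R_pos hrpos n
    have : (0:ℝ) < n.factorial := by exact_mod_cast n.factorial_pos
    positivity
  set T' : ℝ := ∑' n, T (n + 1) with hT'
  have hTsum1 : Summable (fun n => T (n + 1)) := (summable_nat_add_iff 1).mpr hTsum
  have hT'nonneg : 0 ≤ T' := tsum_nonneg fun n => hTnonneg _
  -- the elementwise bound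
  have key : ∀ m : ℕ, m0 ≤ m → ∀ n : ℕ,
      ‖U a b (c + m) (n + 1)‖ ≤ r / (c.re + m) * T (n + 1) := by
    intro m hm n
    set d := c.re + m with hd
    have hrd : r ≤ d := by
      rw [hd, hr]
      have : (m0 : ℝ) ≤ m := Nat.cast_le.mpr hm
      linarith
    have hdpos : 0 < d := lt_of_lt_of_le hrpos hrd
    have hnum : ‖P a (n+1) * P b (n+1)‖ ≤ R p (n+1) * R q (n+1) := by
      rw [norm_mul]
      exact mul_le_mul (normP_le a _) (normP_le b _) (norm_nonneg _) (R_nonneg hppos _)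
    have hre : (c + (m:ℂ)).re = d := re_add_nat c m
    have hden1 : R d (n+1) ≤ ‖P (c + m) (n+1)‖ := by
      have := normP_ge (z := c + m) (by rw [hre]; linarith) (n+1)
      rwa [hre] at this
    have hmono : R (r+1) n ≤ R (d+1) n := R_mono (by linarith) (by linarith) n
    have hden2 : d / r * R r (n+1) ≤ ‖P (c + m) (n+1)‖ := by
      have e1 : d / r * R r (n+1) = d * R (r+1) n := by
        rw [R_succ_left]
        field_simp
      have e2 : R d (n+1) = d * R (d+1) n := R_succ_left d n
      calc d / r * R r (n+1) = d * R (r+1) n := e1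
        _ ≤ d * R (d+1) n := by
            apply mul_le_mul_of_nonneg_left hmono (le_of_lt hdpos)
        _ = R d (n+1) := e2.symm
        _ ≤ ‖P (c + m) (n+1)‖ := hden1
    have hfac : (0:ℝ) < (n+1).factorial := by exact_mod_cast (n+1).factorial_pos
    have hRrpos : 0 < R r (n+1) := R_pos hrpos _
    have hdenpos : 0 < d / r * R r (n+1) * (n+1).factorial := by positivity
    have : ‖U a b (c + m) (n+1)‖
        = ‖P a (n+1) * P b (n+1)‖ / (‖P (c + m) (n+1)‖ * (n+1).factorial) := by
      rw [U, norm_div, norm_mul, norm_mul]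
      congr 2
      simp
    rw [this]
    calc ‖P a (n+1) * P b (n+1)‖ / (‖P (c + m) (n+1)‖ * (n+1).factorial)
        ≤ (R p (n+1) * R q (n+1)) / (d / r * R r (n+1) * (n+1).factorial) := by
          apply div_le_div₀ (mul_nonneg (R_nonneg hppos _) (R_nonneg hqpos _)) hnum hdenpos
          exact mul_le_mul_of_nonneg_right hden2 (le_of_lt hfac)
      _ = r / d * T (n+1) := by
          rw [hT]
          field_simp
  -- assemble
  rw [show (1:ℂ) = 0 + 1 by ring] at *
  rw [tendsto_iff_norm_sub_tendsto_zero]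
  apply squeeze_zero' (g := fun m : ℕ => r * T' / (c.re + m))
  · exact Eventually.of_forall fun m => norm_nonneg _
  · filter_upwards [eventually_ge_atTop m0] with m hm
    have hsm : Summable (U a b (c + m)) := summable_U (avoid_add hc m) (re_lt_add h m)
    have hdpos : (0:ℝ) < c.re + m := by
      have : (m0:ℝ) ≤ m := Nat.cast_le.mpr hm
      have := hrpos
      rw [hr] at this
      linarith
    have hnormsum : Summable (fun n => ‖U a b (c + m) (n + 1)‖) := by
      apply Summable.of_nonneg_of_le (fun n => norm_nonneg _) (key m hm)
      exact hTsum1.mul_left _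
    have heq : (∑' n, U a b (c + m) n) - (0 + 1) = ∑' n, U a b (c + m) (n + 1) := by
      rw [Summable.tsum_eq_zero_add hsm, U_zero]
      ring
    rw [heq]
    calc ‖∑' n, U a b (c + m) (n + 1)‖ ≤ ∑' n, ‖U a b (c + m) (n + 1)‖ :=
          norm_tsum_le_tsum_norm hnormsum
      _ ≤ ∑' n, r / (c.re + m) * T (n + 1) :=
          Summable.tsum_le_tsum (key m hm) hnormsum (hTsum1.mul_left _)
      _ = r / (c.re + m) * T' := by rw [tsum_mul_left]
      _ = r * T' / (c.re + m) := by ring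
  · apply Tendsto.div_atTop tendsto_const_nhds
    exact tendsto_atTop_add_const_left _ _ tendsto_natCast_atTop_atTop


lemma iterate (a b c : ℂ) (hc : ∀ n : ℕ, c ≠ -(n : ℂ)) (h : (a + b).re < c.re) (m : ℕ) :
    (∏ k ∈ Finset.range m, ((c + k) * (c + (k:ℂ) - a - b))) * ∑' n, U a b c n
      = (∏ k ∈ Finset.range m, ((c + (k:ℂ) - a) * (c + (k:ℂ) - b))) * ∑' n, U a b (c + m) n := by
  induction m with
  | zero => simp
  | succ m ih =>
    have hcm := avoid_add hc m
    have hm' := re_lt_add h m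
    have hcont := contiguous a b (c + m) hcm hm'
    have hcast : c + (m:ℂ) + 1 = c + ((m + 1 : ℕ):ℂ) := by push_cast; ring
    rw [hcast] at hcont
    rw [Finset.prod_range_succ, Finset.prod_range_succ]
    calc (∏ k ∈ Finset.range m, ((c + k) * (c + (k:ℂ) - a - b))) * ((c + m) * (c + (m:ℂ) - a - b))
          * ∑' n, U a b c n
        = ((c + m) * ((c + (m:ℂ)) - a - b)) *
            ((∏ k ∈ Finset.range m, ((c + k) * (c + (k:ℂ) - a - b))) * ∑' n, U a b c n) := by
          ring
      _ = ((c + m) * ((c + (m:ℂ)) - a - b)) *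
            ((∏ k ∈ Finset.range m, ((c + (k:ℂ) - a) * (c + (k:ℂ) - b))) * ∑' n, U a b (c + m) n) := by
          rw [ih]
      _ = (∏ k ∈ Finset.range m, ((c + (k:ℂ) - a) * (c + (k:ℂ) - b))) *
            ((c + m) * ((c + (m:ℂ)) - a - b) * ∑' n, U a b (c + m) n) := by ring
      _ = (∏ k ∈ Finset.range m, ((c + (k:ℂ) - a) * (c + (k:ℂ) - b))) *
            (((c + m) - a) * ((c + (m:ℂ)) - b) * ∑' n, U a b (c + ((m+1:ℕ):ℂ)) n) := by
          rw [hcont]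
      _ = (∏ k ∈ Finset.range m, ((c + (k:ℂ) - a) * (c + (k:ℂ) - b))) * ((c + (m:ℂ) - a) * (c + (m:ℂ) - b))
            * ∑' n, U a b (c + ((m+1:ℕ):ℂ)) n := by ring

theorem main (a b c : ℂ) (hc : ∀ n : ℕ, c ≠ -(n : ℂ)) (h : (a + b).re < c.re) :
    Summable (U a b c) ∧ ∑' n, U a b c n
      = Complex.Gamma c * Complex.Gamma (c - a - b) /
          (Complex.Gamma (c - a) * Complex.Gamma (c - b)) := by
  refine ⟨summable_U hc h, ?_⟩
  have hre : a.re + b.re < c.re := by rw [Complex.add_re] at h; exact h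
  have hcab : ∀ k : ℕ, c - a - b ≠ -(k : ℂ) := by
    intro k hk
    have h1 : (c - a - b).re = -(k:ℝ) := by rw [hk]; simp
    have h2 : (0:ℝ) < (c - a - b).re := by
      simp only [Complex.sub_re]
      linarith
    have : (0:ℝ) ≤ (k:ℝ) := Nat.cast_nonneg k
    linarith
  have hprodD : ∀ m : ℕ, (∏ k ∈ Finset.range m, ((c + k) * (c + (k:ℂ) - a - b)))
      = P c m * P (c - a - b) m := by
    intro m
    rw [P_prod, P_prod, ← Finset.prod_mul_distrib]
    exact Finset.prod_congr rfl fun k _ => by ring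
  have hprodN : ∀ m : ℕ, (∏ k ∈ Finset.range m, ((c + (k:ℂ) - a) * (c + (k:ℂ) - b)))
      = P (c - a) m * P (c - b) m := by
    intro m
    rw [P_prod, P_prod, ← Finset.prod_mul_distrib]
    exact Finset.prod_congr rfl fun k _ => by ring
  by_cases hdeg : (∃ k : ℕ, c - a = -(k : ℂ)) ∨ (∃ k : ℕ, c - b = -(k : ℂ))
  · -- degenerate case : both sides are zero
    have hrhs : Complex.Gamma (c - a) * Complex.Gamma (c - b) = 0 := by
      rcases hdeg with ⟨k, hk⟩ | ⟨k, hk⟩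
      · rw [(Complex.Gamma_eq_zero_iff _).mpr ⟨k, hk⟩, zero_mul]
      · rw [(Complex.Gamma_eq_zero_iff _).mpr ⟨k, hk⟩, mul_zero]
    rw [hrhs, div_zero]
    -- now show the sum is zero
    obtain ⟨k, hk⟩ : ∃ k : ℕ, (c + (k:ℂ) - a) * (c + (k:ℂ) - b) = 0 := by
      rcases hdeg with ⟨k, hk⟩ | ⟨k, hk⟩
      · exact ⟨k, by rw [show c + (k:ℂ) - a = (c - a) + k by ring, hk]; simp⟩
      · exact ⟨k, by rw [show c + (k:ℂ) - b = (c - b) + k by ring, hk]; simp⟩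
    have hit := iterate a b c hc h (k + 1)
    have hN : (∏ j ∈ Finset.range (k+1), ((c + (j:ℂ) - a) * (c + (j:ℂ) - b))) = 0 :=
      Finset.prod_eq_zero (Finset.self_mem_range_succ k) hk
    rw [hN, zero_mul] at hit
    have hDne : (∏ j ∈ Finset.range (k+1), ((c + j) * (c + (j:ℂ) - a - b))) ≠ 0 := by
      rw [hprodD]
      exact mul_ne_zero (P_ne_zero hc _) (P_ne_zero hcab _)
    exact (mul_eq_zero.mp hit).resolve_left hDne
  · push_neg at hdeg
    obtain ⟨hca, hcb⟩ := hdeg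
    set F : ℕ → ℂ := fun m => ∑' n, U a b (c + m) n with hF
    set Pm : ℕ → ℂ := fun m => P (c-a) m * P (c-b) m / (P c m * P (c-a-b) m) with hPm
    have hFc : ∀ m : ℕ, ∑' n, U a b c n = Pm m * F m := by
      intro m
      have hit := iterate a b c hc h m
      rw [hprodD, hprodN] at hit
      have hDne : P c m * P (c-a-b) m ≠ 0 :=
        mul_ne_zero (P_ne_zero hc m) (P_ne_zero hcab m)
      rw [hPm, hF]
      field_simp
      linear_combination (P c m * P (c-a-b) m)⁻¹ * hit - (∑' n, U a b c n) * mul_inv_cancel₀ hDne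
    have hlim1 : Tendsto (fun m : ℕ => Pm m * F m) atTop
        (𝓝 (Complex.Gamma c * Complex.Gamma (c-a-b) /
          (Complex.Gamma (c-a) * Complex.Gamma (c-b)) * 1)) := by
      apply Tendsto.mul _ (tendsto_F_one hc h)
      have := key_tendsto hca hcb hc hcab
      rw [show c + (c-a-b) - (c-a) - (c-b) = 0 from by ring] at this
      refine this.congr fun m => ?_
      rw [Complex.cpow_zero, mul_one, hPm]
    have hlim2 : Tendsto (fun m : ℕ => Pm m * F m) atTop (𝓝 (∑' n, U a b c n)) := by
      refine Tendsto.congr (fun m => hFc m) tendsto_const_nhds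
    rw [mul_one] at hlim1
    exact tendsto_nhds_unique hlim2 hlim1


end GaussAux




/-- Gauss's summation theorem: if Re(c) > Re(a+b) and c is not a nonpositive integer,
the hypergeometric series at z = 1 converges and equals Γ(c)Γ(c−a−b)/(Γ(c−a)Γ(c−b)). -/
theorem gauss_hypergeometric_sum (a b c : ℂ) (hc : ∀ n : ℕ, c ≠ -(n : ℂ))
    (h : (a + b).re < c.re) :
    Summable (fun n : ℕ => (ascPochhammer ℂ n).eval a * (ascPochhammer ℂ n).eval b /
      ((ascPochhammer ℂ n).eval c * (n.factorial : ℂ))) ∧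
    ∑' n : ℕ, (ascPochhammer ℂ n).eval a * (ascPochhammer ℂ n).eval b /
        ((ascPochhammer ℂ n).eval c * (n.factorial : ℂ))
      = Complex.Gamma c * Complex.Gamma (c - a - b) /
          (Complex.Gamma (c - a) * Complex.Gamma (c - b)) := by
  exact GaussAux.main a b c hc h
end
end
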